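/- arXiv:1908.02157 — 5 statements merged into one kernel-verified Lean document; each statement's English description precedes it below -/
import Mathlib

section
/- For every q ∈ [1,∞) there exists a constant C > 0 such that for every odd function f ∈ C¹((−1,1)) with ∫_{−1}^{1}(1−y²)|f'(y)|² dy < ∞ one has (∫_{−1}^{1}|f(y)|^q dy)^{1/q} ≤ C (∫_{−1}^{1}(1−y²)|f'(y)|² dy)^{1/2}. -/
open MeasureTheory Set ENNReal

private lemma integrableOn_aux :
    IntegrableOn (fun y : ℝ => (1 - y) ^ (-(1/2) : ℝ) + (1 + y) ^ (-(1/2) : ℝ)) (Ioo (-1) 1) := by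
  have h1 : IntervalIntegrable (fun x : ℝ => x ^ (-(1/2) : ℝ)) volume 0 2 :=
    intervalIntegral.intervalIntegrable_rpow' (by norm_num)
  have ha : IntegrableOn (fun y : ℝ => (1 - y) ^ (-(1/2) : ℝ)) (Ioo (-1) 1) := by
    have h3 : IntervalIntegrable (fun x : ℝ => (1 - x) ^ (-(1/2) : ℝ)) volume (-1) 1 := by
      have := (h1.comp_sub_left 1).symm; norm_num at this; exact this
    exact (intervalIntegrable_iff_integrableOn_Ioo_of_le (by norm_num : (-1:ℝ) ≤ 1)).1 h3
  have hb : IntegrableOn (fun y : ℝ => (1 + y) ^ (-(1/2) : ℝ)) (Ioo (-1) 1) := by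
    have h3 : IntervalIntegrable (fun x : ℝ => (1 + x) ^ (-(1/2) : ℝ)) volume (-1) 1 := by
      have := h1.comp_add_left 1; norm_num at this; exact this
    exact (intervalIntegrable_iff_integrableOn_Ioo_of_le (by norm_num : (-1:ℝ) ≤ 1)).1 h3
  exact ha.add hb

private lemma fin_A (q : ℝ) (hq : 1 ≤ q) :
    (∫⁻ y in Ioo (-1:ℝ) 1, (ENNReal.ofReal (-Real.log (1 - |y|))) ^ (q/2)) < ⊤ := by
  have hq0 : 0 < q := lt_of_lt_of_le one_pos hq
  set g : ℝ → ℝ := fun y => (1 - y) ^ (-(1/2) : ℝ) + (1 + y) ^ (-(1/2) : ℝ) with hg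
  have key : ∀ y ∈ Ioo (-1:ℝ) 1,
      (ENNReal.ofReal (-Real.log (1 - |y|))) ^ (q/2)
        ≤ ENNReal.ofReal (q ^ (q/2 : ℝ)) * ENNReal.ofReal (g y) := by
    intro y hy
    have hy1 : |y| < 1 := abs_lt.2 ⟨hy.1, hy.2⟩
    set s : ℝ := 1 - |y| with hs
    have hs0 : 0 < s := by rw [hs]; linarith
    have hs1 : s ≤ 1 := by rw [hs]; have := abs_nonneg y; linarith
    have hL0 : 0 ≤ -Real.log s := by
      have := Real.log_nonpos (le_of_lt hs0) hs1
      linarith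
    have hL : -Real.log s ≤ q * s ^ (-(1/q) : ℝ) := by
      have h1 : -Real.log s = Real.log s⁻¹ := (Real.log_inv s).symm
      have h2 : Real.log s⁻¹ = q * Real.log ((s⁻¹) ^ (1/q : ℝ)) := by
        rw [Real.log_rpow (inv_pos.2 hs0)]
        field_simp
      have h3 : Real.log ((s⁻¹) ^ (1/q : ℝ)) ≤ (s⁻¹) ^ (1/q : ℝ) := by
        have := Real.log_le_sub_one_of_pos (Real.rpow_pos_of_pos (inv_pos.2 hs0) (1/q))
        linarith
      have h4 : (s⁻¹ : ℝ) ^ (1/q : ℝ) = s ^ (-(1/q) : ℝ) := by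
        rw [Real.inv_rpow (le_of_lt hs0), ← Real.rpow_neg (le_of_lt hs0)]
      calc -Real.log s = q * Real.log ((s⁻¹) ^ (1/q : ℝ)) := by rw [h1, h2]
        _ ≤ q * ((s⁻¹) ^ (1/q : ℝ)) := by
            exact mul_le_mul_of_nonneg_left h3 (le_of_lt hq0)
        _ = q * s ^ (-(1/q) : ℝ) := by rw [h4]
    have hpow : (-Real.log s) ^ (q/2 : ℝ) ≤ q ^ (q/2 : ℝ) * s ^ (-(1/2) : ℝ) := by
      have h5 : (-Real.log s) ^ (q/2 : ℝ) ≤ (q * s ^ (-(1/q) : ℝ)) ^ (q/2 : ℝ) :=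
        Real.rpow_le_rpow hL0 hL (by positivity)
      have h6 : (q * s ^ (-(1/q) : ℝ)) ^ (q/2 : ℝ)
          = q ^ (q/2 : ℝ) * s ^ (-(1/2) : ℝ) := by
        rw [Real.mul_rpow (le_of_lt hq0) (Real.rpow_nonneg (le_of_lt hs0) _),
          ← Real.rpow_mul (le_of_lt hs0)]
        congr 1
        field_simp
      linarith
    have hsg : s ^ (-(1/2) : ℝ) ≤ g y := by
      rcases le_or_gt 0 y with h | h
      · have : |y| = y := abs_of_nonneg h
        have h2 : s = 1 - y := by rw [hs, this]
        rw [h2, hg]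
        have : (0:ℝ) ≤ (1 + y) ^ (-(1/2) : ℝ) := Real.rpow_nonneg (by linarith) _
        simp only []
        linarith
      · have : |y| = -y := abs_of_neg h
        have h2 : s = 1 + y := by rw [hs, this]; ring
        rw [h2, hg]
        have : (0:ℝ) ≤ (1 - y) ^ (-(1/2) : ℝ) := Real.rpow_nonneg (by linarith) _
        simp only []
        linarith
    calc (ENNReal.ofReal (-Real.log s)) ^ (q/2 : ℝ)
        = ENNReal.ofReal ((-Real.log s) ^ (q/2 : ℝ)) :=
          ENNReal.ofReal_rpow_of_nonneg hL0 (by positivity)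
      _ ≤ ENNReal.ofReal (q ^ (q/2 : ℝ) * g y) := by
          apply ENNReal.ofReal_le_ofReal
          calc (-Real.log s) ^ (q/2 : ℝ) ≤ q ^ (q/2 : ℝ) * s ^ (-(1/2) : ℝ) := hpow
            _ ≤ q ^ (q/2 : ℝ) * g y := by
                exact mul_le_mul_of_nonneg_left hsg (by positivity)
      _ = ENNReal.ofReal (q ^ (q/2 : ℝ)) * ENNReal.ofReal (g y) :=
          ENNReal.ofReal_mul (by positivity)
  have hgfin : (∫⁻ y in Ioo (-1:ℝ) 1, ENNReal.ofReal (g y)) < ⊤ := by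
    have h := integrableOn_aux.hasFiniteIntegral
    rw [hasFiniteIntegral_iff_ofReal] at h
    · exact h
    · refine (ae_restrict_iff' measurableSet_Ioo).2 (ae_of_all _ fun y hy => ?_)
      have h1 : (0:ℝ) ≤ (1 - y) ^ (-(1/2) : ℝ) := Real.rpow_nonneg (by linarith [hy.2]) _
      have h2 : (0:ℝ) ≤ (1 + y) ^ (-(1/2) : ℝ) := Real.rpow_nonneg (by linarith [hy.1]) _
      simp only [hg, Pi.zero_apply]
      linarith
  calc (∫⁻ y in Ioo (-1:ℝ) 1, (ENNReal.ofReal (-Real.log (1 - |y|))) ^ (q/2))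
      ≤ ∫⁻ y in Ioo (-1:ℝ) 1, ENNReal.ofReal (q ^ (q/2 : ℝ)) * ENNReal.ofReal (g y) := by
        refine lintegral_mono_ae ?_
        exact (ae_restrict_iff' measurableSet_Ioo).2 (ae_of_all _ key)
    _ = ENNReal.ofReal (q ^ (q/2 : ℝ)) * ∫⁻ y in Ioo (-1:ℝ) 1, ENNReal.ofReal (g y) :=
        lintegral_const_mul' _ _ ENNReal.ofReal_ne_top
    _ < ⊤ := ENNReal.mul_lt_top ENNReal.ofReal_lt_top hgfin

private lemma pointwise_bound (f f' : ℝ → ℂ)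
    (hderiv : ∀ y ∈ Ioo (-1:ℝ) 1, HasDerivAt f (f' y) y)
    (hcont : ContinuousOn f' (Ioo (-1:ℝ) 1))
    (hodd : ∀ y ∈ Ioo (-1:ℝ) 1, f (-y) = - f y)
    {y : ℝ} (hy0 : 0 ≤ y) (hy1 : y < 1) :
    ENNReal.ofReal ‖f y‖ ≤
      (∫⁻ t in Ioo (-1:ℝ) 1, ENNReal.ofReal ((1 - t^2) * ‖f' t‖^2)) ^ (1/2 : ℝ) *
        (ENNReal.ofReal (-Real.log (1 - y))) ^ (1/2 : ℝ) := by
  set E := (∫⁻ t in Ioo (-1:ℝ) 1, ENNReal.ofReal ((1 - t^2) * ‖f' t‖^2)) with hE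
  have hIcc : Icc (0:ℝ) y ⊆ Ioo (-1:ℝ) 1 :=
    fun t ht => ⟨by linarith [ht.1], lt_of_le_of_lt ht.2 hy1⟩
  have hIoo : Ioo (0:ℝ) y ⊆ Ioo (-1:ℝ) 1 := fun t ht => hIcc (Ioo_subset_Icc_self ht)
  have hmem0 : (0:ℝ) ∈ Ioo (-1:ℝ) 1 := by constructor <;> norm_num
  have hf0 : f 0 = 0 := by
    have h := hodd 0 hmem0
    rw [neg_zero] at h
    have h2 : (2:ℂ) * f 0 = 0 := by linear_combination h
    exact (mul_eq_zero.mp h2).resolve_left two_ne_zero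
  -- FTC
  have hcont' : ContinuousOn f' (Icc (0:ℝ) y) := hcont.mono hIcc
  have hftc : ∫ t in (0:ℝ)..y, f' t = f y - f 0 := by
    apply intervalIntegral.integral_eq_sub_of_hasDerivAt
    · intro t ht
      rw [uIcc_of_le hy0] at ht
      exact hderiv t (hIcc ht)
    · apply ContinuousOn.intervalIntegrable
      rwa [uIcc_of_le hy0]
  have hnorm : ‖f y‖ ≤ ∫ t in Ioo (0:ℝ) y, ‖f' t‖ := by
    have h1 : f y = ∫ t in (0:ℝ)..y, f' t := by rw [hftc, hf0, sub_zero]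
    calc ‖f y‖ = ‖∫ t in (0:ℝ)..y, f' t‖ := by rw [← h1]
      _ ≤ ∫ t in (0:ℝ)..y, ‖f' t‖ :=
          intervalIntegral.norm_integral_le_integral_norm hy0
      _ = ∫ t in Ioo (0:ℝ) y, ‖f' t‖ := by
          rw [intervalIntegral.integral_of_le hy0, integral_Ioc_eq_integral_Ioo]
  have hInt : IntegrableOn (fun t => ‖f' t‖) (Ioo 0 y) :=
    (hcont'.norm.integrableOn_Icc).mono_set Ioo_subset_Icc_self
  have h5 : ENNReal.ofReal ‖f y‖ ≤ ∫⁻ t in Ioo (0:ℝ) y, ENNReal.ofReal ‖f' t‖ := by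
    rw [← ofReal_integral_eq_lintegral_ofReal hInt (ae_of_all _ fun t => norm_nonneg _)]
    exact ENNReal.ofReal_le_ofReal hnorm
  set u : ℝ → ℝ≥0∞ := fun t => ENNReal.ofReal (Real.sqrt (1 - t^2) * ‖f' t‖) with hu_def
  set v : ℝ → ℝ≥0∞ := fun t => ENNReal.ofReal ((Real.sqrt (1 - t^2))⁻¹) with hv_def
  have hsq : ∀ t ∈ Ioo (0:ℝ) y, (0:ℝ) < 1 - t^2 := by
    intro t ht
    nlinarith [ht.1, ht.2, hy1]
  have hsplit : (∫⁻ t in Ioo (0:ℝ) y, ENNReal.ofReal ‖f' t‖)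
      = ∫⁻ t in Ioo (0:ℝ) y, u t * v t := by
    apply setLIntegral_congr_fun measurableSet_Ioo
    intro t ht
    have h1 := hsq t ht
    have h2 : Real.sqrt (1 - t^2) ≠ 0 := by positivity
    rw [hu_def, hv_def]; beta_reduce; rw [← ENNReal.ofReal_mul (by positivity)]
    congr 1
    field_simp
  have hu_meas : AEMeasurable u (volume.restrict (Ioo (0:ℝ) y)) := by
    apply ENNReal.measurable_ofReal.comp_aemeasurable
    apply ContinuousOn.aemeasurable _ measurableSet_Ioo
    exact (((continuous_const.sub (continuous_pow 2)).sqrt).continuousOn).mul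
      ((hcont.mono hIoo).norm)
  have hv_meas : AEMeasurable v (volume.restrict (Ioo (0:ℝ) y)) := by
    apply Measurable.aemeasurable
    apply ENNReal.measurable_ofReal.comp
    exact ((continuous_const.sub (continuous_pow 2)).sqrt).measurable.inv
  have hconj : Real.HolderConjugate 2 2 := Real.HolderConjugate.two_two
  have hH := ENNReal.lintegral_mul_le_Lp_mul_Lq (volume.restrict (Ioo (0:ℝ) y))
    hconj hu_meas hv_meas
  simp only [Pi.mul_apply] at hH
  have hu2 : (∫⁻ t in Ioo (0:ℝ) y, u t ^ (2:ℝ)) ≤ E := by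
    have heq : (∫⁻ t in Ioo (0:ℝ) y, u t ^ (2:ℝ))
        = ∫⁻ t in Ioo (0:ℝ) y, ENNReal.ofReal ((1 - t^2) * ‖f' t‖^2) := by
      apply setLIntegral_congr_fun measurableSet_Ioo
      intro t ht
      have h1 := hsq t ht
      rw [hu_def]; beta_reduce; rw [ENNReal.ofReal_rpow_of_nonneg (by positivity) (by norm_num)]
      congr 1
      rw [show (2:ℝ) = ((2:ℕ):ℝ) by norm_num, Real.rpow_natCast, mul_pow,
        Real.sq_sqrt (le_of_lt h1)]
    rw [heq, hE]
    exact lintegral_mono' (Measure.restrict_mono hIoo le_rfl) le_rfl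
  have hv2 : (∫⁻ t in Ioo (0:ℝ) y, v t ^ (2:ℝ)) ≤ ENNReal.ofReal (-Real.log (1 - y)) := by
    have hstep : (∫⁻ t in Ioo (0:ℝ) y, v t ^ (2:ℝ))
        ≤ ∫⁻ t in Ioo (0:ℝ) y, ENNReal.ofReal ((1 - t)⁻¹) := by
      refine lintegral_mono_ae ((ae_restrict_iff' measurableSet_Ioo).2
        (ae_of_all _ fun t ht => ?_))
      have h1 := hsq t ht
      have ht1 : t < 1 := by nlinarith [ht.1]
      have h2 : (0:ℝ) < 1 - t := by linarith
      have h3 : 1 - t ≤ 1 - t^2 := by nlinarith [ht.1]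
      rw [hv_def, ENNReal.ofReal_rpow_of_nonneg (by positivity) (by norm_num)]
      apply ENNReal.ofReal_le_ofReal
      rw [show (2:ℝ) = ((2:ℕ):ℝ) by norm_num, Real.rpow_natCast, inv_pow,
        Real.sq_sqrt (le_of_lt h1)]
      exact inv_anti₀ h2 h3
    have hc2 : ContinuousOn (fun t : ℝ => (1 - t)⁻¹) (Icc (0:ℝ) y) := by
      apply ContinuousOn.inv₀ (continuous_const.sub continuous_id).continuousOn
      intro t ht hc
      rw [Pi.sub_apply, sub_eq_zero] at hc
      simp only [id_eq] at hc
      have : t < 1 := lt_of_le_of_lt ht.2 hy1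
      linarith
    have hInt2 : IntegrableOn (fun t : ℝ => (1 - t)⁻¹) (Ioo 0 y) :=
      hc2.integrableOn_Icc.mono_set Ioo_subset_Icc_self
    have heval : ∫ t in Ioo (0:ℝ) y, (1 - t)⁻¹ = -Real.log (1 - y) := by
      have h1 : ∫ t in Ioo (0:ℝ) y, (1 - t)⁻¹ = ∫ t in (0:ℝ)..y, (1 - t)⁻¹ := by
        rw [intervalIntegral.integral_of_le hy0, integral_Ioc_eq_integral_Ioo]
      have h2 : ∫ t in (0:ℝ)..y, (1 - t)⁻¹
          = (-Real.log (1 - y)) - (-Real.log (1 - 0)) := by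
        apply intervalIntegral.integral_eq_sub_of_hasDerivAt
        · intro t ht
          rw [uIcc_of_le hy0] at ht
          have ht1 : t < 1 := lt_of_le_of_lt ht.2 hy1
          have hne : (1:ℝ) - t ≠ 0 := by intro hc; rw [sub_eq_zero] at hc; linarith
          have hd := (((hasDerivAt_id t).const_sub 1).log hne).neg
          convert hd using 1
          · rfl
          · simp only [id_eq, neg_div, neg_neg, one_div]
        · apply ContinuousOn.intervalIntegrable
          apply ContinuousOn.inv₀ (continuous_const.sub continuous_id).continuousOn
          intro t ht hc
          rw [uIcc_of_le hy0] at ht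
          rw [Pi.sub_apply, sub_eq_zero] at hc
          simp only [id_eq] at hc
          have : t < 1 := lt_of_le_of_lt ht.2 hy1
          linarith
      rw [h1, h2]
      norm_num
    have hnn : 0 ≤ᵐ[volume.restrict (Ioo (0:ℝ) y)] fun t : ℝ => (1 - t)⁻¹ := by
      refine (ae_restrict_iff' measurableSet_Ioo).2 (ae_of_all _ fun t ht => ?_)
      have : t < 1 := lt_of_lt_of_le ht.2 (le_of_lt hy1)
      have : (0:ℝ) ≤ 1 - t := by linarith
      positivity
    calc (∫⁻ t in Ioo (0:ℝ) y, v t ^ (2:ℝ))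
        ≤ ∫⁻ t in Ioo (0:ℝ) y, ENNReal.ofReal ((1 - t)⁻¹) := hstep
      _ = ENNReal.ofReal (∫ t in Ioo (0:ℝ) y, (1 - t)⁻¹) :=
          (ofReal_integral_eq_lintegral_ofReal hInt2 hnn).symm
      _ = ENNReal.ofReal (-Real.log (1 - y)) := by rw [heval]
  calc ENNReal.ofReal ‖f y‖
      ≤ ∫⁻ t in Ioo (0:ℝ) y, ENNReal.ofReal ‖f' t‖ := h5
    _ = ∫⁻ t in Ioo (0:ℝ) y, u t * v t := hsplit
    _ ≤ (∫⁻ t in Ioo (0:ℝ) y, u t ^ (2:ℝ)) ^ (1/2 : ℝ)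
          * (∫⁻ t in Ioo (0:ℝ) y, v t ^ (2:ℝ)) ^ (1/2 : ℝ) := by
        simpa using hH
    _ ≤ E ^ (1/2 : ℝ) * (ENNReal.ofReal (-Real.log (1 - y))) ^ (1/2 : ℝ) := by
        exact mul_le_mul' (ENNReal.rpow_le_rpow hu2 (by norm_num))
          (ENNReal.rpow_le_rpow hv2 (by norm_num))


/-- Sobolev-type embedding (Lemma 3.4 / `lem:LpH1`): for every `q ∈ [1,∞)` there is a
constant `C > 0` such that every odd `C¹` function on `(-1,1)` with finite weighted energy
satisfies `‖f‖_{L^q(-1,1)} ≤ C ‖(1-y²)^{1/2} f'‖_{L²(-1,1)}`. -/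
theorem stmt0 (q : ℝ) (hq : 1 ≤ q) :
    ∃ C : ℝ, 0 < C ∧ ∀ f f' : ℝ → ℂ,
      (∀ y ∈ Ioo (-1:ℝ) 1, HasDerivAt f (f' y) y) →
      ContinuousOn f' (Ioo (-1:ℝ) 1) →
      (∀ y ∈ Ioo (-1:ℝ) 1, f (-y) = - f y) →
      (∫⁻ y in Ioo (-1:ℝ) 1, ENNReal.ofReal ((1 - y^2) * ‖f' y‖^2)) < ⊤ →
      (∫⁻ y in Ioo (-1:ℝ) 1, ENNReal.ofReal (‖f y‖ ^ q)) ^ (1/q) ≤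
        ENNReal.ofReal C *
          (∫⁻ y in Ioo (-1:ℝ) 1, ENNReal.ofReal ((1 - y^2) * ‖f' y‖^2)) ^ (1/2 : ℝ) := by
  have hq0 : 0 < q := lt_of_lt_of_le one_pos hq
  set A := ∫⁻ y in Ioo (-1:ℝ) 1, (ENNReal.ofReal (-Real.log (1 - |y|))) ^ (q/2) with hA_def
  have hA : A < ⊤ := fin_A q hq
  refine ⟨max ((A ^ (1/q : ℝ)).toReal) 1, lt_of_lt_of_le one_pos (le_max_right _ _),
    fun f f' hderiv hcont hodd hE => ?_⟩
  set E := ∫⁻ y in Ioo (-1:ℝ) 1, ENNReal.ofReal ((1 - y^2) * ‖f' y‖^2) with hE_def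
  have hpt : ∀ y ∈ Ioo (-1:ℝ) 1, ENNReal.ofReal ‖f y‖ ≤
      E ^ (1/2 : ℝ) * (ENNReal.ofReal (-Real.log (1 - |y|))) ^ (1/2 : ℝ) := by
    intro y hy
    rcases le_or_gt 0 y with h | h
    · rw [abs_of_nonneg h]
      exact pointwise_bound f f' hderiv hcont hodd h hy.2
    · have hy' : (0:ℝ) ≤ -y := by linarith
      have hy'' : -y < 1 := by linarith [hy.1]
      have hthis := pointwise_bound f f' hderiv hcont hodd hy' hy''
      have hne : ‖f (-y)‖ = ‖f y‖ := by rw [hodd y hy, norm_neg]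
      rw [abs_of_neg h]
      rwa [hne] at hthis
  have hptq : ∀ y ∈ Ioo (-1:ℝ) 1, ENNReal.ofReal (‖f y‖ ^ q) ≤
      E ^ (q/2 : ℝ) * (ENNReal.ofReal (-Real.log (1 - |y|))) ^ (q/2 : ℝ) := by
    intro y hy
    have h2 : ENNReal.ofReal (‖f y‖ ^ q) = (ENNReal.ofReal ‖f y‖) ^ q :=
      (ENNReal.ofReal_rpow_of_nonneg (norm_nonneg _) (le_of_lt hq0)).symm
    rw [h2]
    calc (ENNReal.ofReal ‖f y‖) ^ q
        ≤ (E ^ (1/2 : ℝ) * (ENNReal.ofReal (-Real.log (1 - |y|))) ^ (1/2 : ℝ)) ^ q :=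
          ENNReal.rpow_le_rpow (hpt y hy) (le_of_lt hq0)
      _ = E ^ (q/2 : ℝ) * (ENNReal.ofReal (-Real.log (1 - |y|))) ^ (q/2 : ℝ) := by
          rw [ENNReal.mul_rpow_of_nonneg _ _ (le_of_lt hq0), ← ENNReal.rpow_mul,
            ← ENNReal.rpow_mul, show (1/2 : ℝ) * q = q/2 by ring]
  have hEq2 : E ^ (q/2 : ℝ) ≠ ⊤ :=
    (ENNReal.rpow_lt_top_of_nonneg (by positivity) hE.ne).ne
  have hmain : (∫⁻ y in Ioo (-1:ℝ) 1, ENNReal.ofReal (‖f y‖ ^ q)) ≤ E ^ (q/2 : ℝ) * A := by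
    calc (∫⁻ y in Ioo (-1:ℝ) 1, ENNReal.ofReal (‖f y‖ ^ q))
        ≤ ∫⁻ y in Ioo (-1:ℝ) 1,
            E ^ (q/2 : ℝ) * (ENNReal.ofReal (-Real.log (1 - |y|))) ^ (q/2 : ℝ) :=
          lintegral_mono_ae ((ae_restrict_iff' measurableSet_Ioo).2 (ae_of_all _ hptq))
      _ = E ^ (q/2 : ℝ) * A := lintegral_const_mul' _ _ hEq2
  have hfinal := ENNReal.rpow_le_rpow hmain (by positivity : (0:ℝ) ≤ 1/q)
  rw [ENNReal.mul_rpow_of_nonneg _ _ (by positivity), ← ENNReal.rpow_mul,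
    show (q/2 : ℝ) * (1/q) = 1/2 by field_simp] at hfinal
  have hAq : A ^ (1/q : ℝ) ≠ ⊤ :=
    (ENNReal.rpow_lt_top_of_nonneg (by positivity) hA.ne).ne
  have hC : A ^ (1/q : ℝ) ≤ ENNReal.ofReal (max ((A ^ (1/q : ℝ)).toReal) 1) :=
    calc A ^ (1/q : ℝ) = ENNReal.ofReal ((A ^ (1/q : ℝ)).toReal) :=
          (ENNReal.ofReal_toReal hAq).symm
      _ ≤ _ := ENNReal.ofReal_le_ofReal (le_max_left _ _)
  calc (∫⁻ y in Ioo (-1:ℝ) 1, ENNReal.ofReal (‖f y‖ ^ q)) ^ (1/q)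
      ≤ E ^ (1/2 : ℝ) * A ^ (1/q : ℝ) := hfinal
    _ ≤ E ^ (1/2 : ℝ) * ENNReal.ofReal (max ((A ^ (1/q : ℝ)).toReal) 1) :=
        mul_le_mul' le_rfl hC
    _ = ENNReal.ofReal (max ((A ^ (1/q : ℝ)).toReal) 1) * E ^ (1/2 : ℝ) := mul_comm _ _
end

section
/- Let (f_n)_{n∈ℕ} ⊂ C¹((−1,1)) be a sequence of odd functions for which there exists M > 0 with ∫_{−1}^{1}(1−y²)|f_n'(y)|² dy ≤ M for all n ∈ ℕ. Then there exists a subsequence (f_{n_k})_{k∈ℕ} that is a Cauchy sequence with respect to the L²(−1,1) norm. -/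
open MeasureTheory Set ENNReal

/-- Key estimate: fundamental theorem of calculus plus the AM-GM inequality
`|F'| ≤ (r(1-t²)|F'|² + (r(1-t²))⁻¹)/2` gives a modulus-of-continuity bound. -/
lemma keyB (F F' : ℝ → ℂ) (M : ℝ) (hM : 0 ≤ M)
    (hderiv : ∀ y ∈ Ioo (-1:ℝ) 1, HasDerivAt F (F' y) y)
    (hcont : ContinuousOn F' (Ioo (-1:ℝ) 1))
    (hbound : (∫⁻ y in Ioo (-1:ℝ) 1, ENNReal.ofReal ((1 - y^2) * ‖F' y‖^2))
        ≤ ENNReal.ofReal M)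
    {u v : ℝ} (hu : -1 < u) (huv : u ≤ v) (hv : v < 1) {r : ℝ} (hr : 0 < r) :
    ‖F v - F u‖ ≤ (r * M + (1/r) * ∫ t in u..v, (1 - t^2)⁻¹) / 2 := by
  have hsub : Icc u v ⊆ Ioo (-1:ℝ) 1 := fun t ht => ⟨hu.trans_le ht.1, ht.2.trans_lt hv⟩
  have hposc : ∀ t ∈ Icc u v, (0:ℝ) < 1 - t^2 := by
    intro t ht
    have h := hsub ht
    nlinarith [h.1, h.2]
  have hIcc : uIcc u v = Icc u v := uIcc_of_le huv
  have hc1 : ContinuousOn F' (Icc u v) := hcont.mono hsub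
  have hcnorm : ContinuousOn (fun t => ‖F' t‖) (Icc u v) := hc1.norm
  have hcg : ContinuousOn (fun t => (1 - t^2) * ‖F' t‖^2) (Icc u v) :=
    ((continuous_const.sub (continuous_pow 2)).continuousOn).mul (hcnorm.pow 2)
  have hcinv : ContinuousOn (fun t : ℝ => (1 - t^2)⁻¹) (Icc u v) :=
    ((continuous_const.sub (continuous_pow 2)).continuousOn).inv₀
      (fun t ht => (hposc t ht).ne')
  have hftc : ∫ t in u..v, F' t = F v - F u := by
    apply intervalIntegral.integral_eq_sub_of_hasDerivAt
    · intro t ht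
      rw [hIcc] at ht
      exact hderiv t (hsub ht)
    · exact (hIcc ▸ hc1).intervalIntegrable
  have step1 : ‖F v - F u‖ ≤ ∫ t in u..v, ‖F' t‖ := by
    rw [← hftc]
    exact intervalIntegral.norm_integral_le_integral_norm huv
  have hint1 : IntervalIntegrable (fun t => ‖F' t‖) volume u v :=
    (hIcc ▸ hcnorm).intervalIntegrable
  have hintg : IntervalIntegrable (fun t => (1 - t^2) * ‖F' t‖^2) volume u v :=
    (hIcc ▸ hcg).intervalIntegrable
  have hinti : IntervalIntegrable (fun t : ℝ => (1 - t^2)⁻¹) volume u v :=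
    (hIcc ▸ hcinv).intervalIntegrable
  have hptwise : ∀ t ∈ Icc u v,
      ‖F' t‖ ≤ (r * ((1 - t^2) * ‖F' t‖^2) + (1/r) * (1 - t^2)⁻¹) / 2 := by
    intro t ht
    have hc := hposc t ht
    have h2 : (1/r) * (1 - t^2)⁻¹ = (r * (1 - t^2))⁻¹ := by
      rw [one_div, mul_inv]
    rw [h2, le_div_iff₀ (by norm_num : (0:ℝ) < 2), ← sub_nonneg]
    have h3 : r * ((1 - t^2) * ‖F' t‖^2) + (r * (1 - t^2))⁻¹ - ‖F' t‖ * 2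
        = (r * (1 - t^2) * ‖F' t‖ - 1)^2 / (r * (1 - t^2)) := by
      field_simp
      ring
    rw [h3]
    positivity
  have step2 : ∫ t in u..v, ‖F' t‖
      ≤ ∫ t in u..v, (r * ((1 - t^2) * ‖F' t‖^2) + (1/r) * (1 - t^2)⁻¹) / 2 := by
    apply intervalIntegral.integral_mono_on huv hint1 _ hptwise
    exact ((hintg.const_mul r).add (hinti.const_mul (1/r))).div_const 2
  have step3 : ∫ t in u..v, (r * ((1 - t^2) * ‖F' t‖^2) + (1/r) * (1 - t^2)⁻¹) / 2
      = ((r * ∫ t in u..v, (1 - t^2) * ‖F' t‖^2)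
          + (1/r) * ∫ t in u..v, (1 - t^2)⁻¹) / 2 := by
    rw [intervalIntegral.integral_div,
      intervalIntegral.integral_add (hintg.const_mul r) (hinti.const_mul (1/r)),
      intervalIntegral.integral_const_mul, intervalIntegral.integral_const_mul]
  have henergy : ∫ t in u..v, (1 - t^2) * ‖F' t‖^2 ≤ M := by
    have hs2 : Ioc u v ⊆ Ioo (-1:ℝ) 1 := fun t ht => ⟨hu.trans ht.1, ht.2.trans_lt hv⟩
    rw [intervalIntegral.integral_of_le huv]
    have hmeas : AEStronglyMeasurable (fun t => (1 - t^2) * ‖F' t‖^2)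
        (volume.restrict (Ioc u v)) :=
      (hcg.mono Ioc_subset_Icc_self).aestronglyMeasurable measurableSet_Ioc
    have hnn : 0 ≤ᵐ[volume.restrict (Ioc u v)] fun t => (1 - t^2) * ‖F' t‖^2 := by
      refine (ae_restrict_iff' measurableSet_Ioc).mpr (ae_of_all _ fun t ht => ?_)
      have := hposc t (Ioc_subset_Icc_self ht)
      positivity
    rw [MeasureTheory.integral_eq_lintegral_of_nonneg_ae hnn hmeas]
    refine ENNReal.toReal_le_of_le_ofReal hM ?_
    exact le_trans (lintegral_mono_set hs2) hbound
  have step4 : r * ∫ t in u..v, (1 - t^2) * ‖F' t‖^2 ≤ r * M :=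
    mul_le_mul_of_nonneg_left henergy hr.le
  calc ‖F v - F u‖ ≤ ∫ t in u..v, ‖F' t‖ := step1
    _ ≤ ((r * ∫ t in u..v, (1 - t^2) * ‖F' t‖^2)
          + (1/r) * ∫ t in u..v, (1 - t^2)⁻¹) / 2 := by rw [← step3]; exact step2
    _ ≤ (r * M + (1/r) * ∫ t in u..v, (1 - t^2)⁻¹) / 2 := by
      have h0 : (0:ℝ) ≤ (1/r) * ∫ t in u..v, (1 - t^2)⁻¹ ∨ True := Or.inr trivial
      linarith [step4]

/-- Pointwise bound: odd functions with bounded weighted energy satisfy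
`‖F y‖² ≤ M ∫₀^{|y|} (1-t²)⁻¹`. -/
lemma keyD (F F' : ℝ → ℂ) (M : ℝ) (hM : 0 < M)
    (hderiv : ∀ y ∈ Ioo (-1:ℝ) 1, HasDerivAt F (F' y) y)
    (hcont : ContinuousOn F' (Ioo (-1:ℝ) 1))
    (hodd : ∀ y ∈ Ioo (-1:ℝ) 1, F (-y) = - F y)
    (hbound : (∫⁻ y in Ioo (-1:ℝ) 1, ENNReal.ofReal ((1 - y^2) * ‖F' y‖^2))
        ≤ ENNReal.ofReal M) :
    ∀ y ∈ Ioo (-1:ℝ) 1, ‖F y‖^2 ≤ M * ∫ t in (0:ℝ)..|y|, (1 - t^2)⁻¹ := by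
  have hzero : F 0 = 0 := by
    have h := hodd 0 (by norm_num)
    rw [neg_zero] at h
    linear_combination h / 2
  have hpos : ∀ y, 0 ≤ y → y < 1 → ‖F y‖^2 ≤ M * ∫ t in (0:ℝ)..y, (1 - t^2)⁻¹ := by
    intro y h0 h1
    have hposc : ∀ t ∈ Icc (0:ℝ) y, (0:ℝ) < 1 - t^2 := by
      intro t ht
      nlinarith [ht.1, ht.2]
    have hHy : y ≤ ∫ t in (0:ℝ)..y, (1 - t^2)⁻¹ := by
      have hcinv : ContinuousOn (fun t : ℝ => (1 - t^2)⁻¹) (Icc 0 y) :=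
        ((continuous_const.sub (continuous_pow 2)).continuousOn).inv₀
          (fun t ht => (hposc t ht).ne')
      have h2 : ∫ t in (0:ℝ)..y, (1:ℝ) ≤ ∫ t in (0:ℝ)..y, (1 - t^2)⁻¹ := by
        apply intervalIntegral.integral_mono_on h0 intervalIntegrable_const
          ((uIcc_of_le h0 ▸ hcinv).intervalIntegrable)
        intro t ht
        have hc := hposc t ht
        nlinarith [mul_inv_cancel₀ hc.ne', inv_nonneg.mpr hc.le, sq_nonneg t, ht.1]
      simpa using h2
    rcases eq_or_lt_of_le h0 with rfl | hy0
    · simp [hzero]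
    · set H := ∫ t in (0:ℝ)..y, (1 - t^2)⁻¹ with hH
      have hHpos : 0 < H := lt_of_lt_of_le hy0 hHy
      set r := Real.sqrt (H / M) with hrdef
      have hrpos : 0 < r := Real.sqrt_pos.mpr (div_pos hHpos hM)
      have hr2 : r^2 = H / M := Real.sq_sqrt (div_pos hHpos hM).le
      have hb := keyB F F' M hM.le hderiv hcont hbound
        (u := 0) (v := y) (by norm_num) h0 h1 hrpos
      rw [hzero, sub_zero] at hb
      have hrM : r^2 * M = H := by
        rw [hr2]; field_simp
      have h2 : (1/r) * H = r * M := by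
        rw [← hrM]; field_simp
      rw [← hH, h2, show (r*M + r*M)/2 = r*M by ring] at hb
      calc ‖F y‖^2 ≤ (r*M)^2 := by nlinarith [norm_nonneg (F y)]
        _ = M * H := by rw [mul_pow, hr2]; field_simp
  intro y hy
  rcases le_or_gt 0 y with h0 | h0
  · rw [abs_of_nonneg h0]
    exact hpos y h0 hy.2
  · rw [abs_of_neg h0]
    have hny : -y ∈ Ioo (-1:ℝ) 1 := ⟨by linarith [hy.2], by linarith [hy.1]⟩
    have h := hodd (-y) hny
    rw [neg_neg] at h
    rw [h, norm_neg]
    exact hpos (-y) (by linarith) hny.2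

/-- Estimate of the incomplete weight integral by an integrable majorant. -/
lemma keyE {y : ℝ} (h0 : 0 ≤ y) (h1 : y < 1) :
    ∫ t in (0:ℝ)..y, (1 - t^2)⁻¹ ≤ 2 * (1 - y) ^ (-(1/2) : ℝ) := by
  have hposc : ∀ t ∈ Icc (0:ℝ) y, (0:ℝ) < 1 - t := fun t ht => by
    have := ht.2; linarith
  have hpt : ∀ t ∈ Icc (0:ℝ) y, (1 - t^2)⁻¹ ≤ (1 - t) ^ (-(3/2) : ℝ) := by
    intro t ht
    have hc : (0:ℝ) < 1 - t := hposc t ht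
    have hc2 : (0:ℝ) < 1 - t^2 := by nlinarith [ht.1, ht.2]
    have h2 : (1 - t^2)⁻¹ ≤ (1 - t)⁻¹ := by
      apply inv_anti₀ hc
      nlinarith [ht.1, ht.2]
    have h3 : (1 - t)⁻¹ = (1 - t) ^ (-1 : ℝ) := (Real.rpow_neg_one _).symm
    have h4 : (1 - t) ^ (-1:ℝ) ≤ (1 - t) ^ (-(3/2):ℝ) := by
      apply Real.rpow_le_rpow_of_exponent_ge hc (by nlinarith [ht.1])
      norm_num
    calc (1 - t^2)⁻¹ ≤ (1 - t)⁻¹ := h2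
      _ = (1 - t) ^ (-1:ℝ) := h3
      _ ≤ (1 - t) ^ (-(3/2):ℝ) := h4
  have hG : ∀ t ∈ uIcc (0:ℝ) y,
      HasDerivAt (fun s : ℝ => 2 * (1 - s) ^ (-(1/2):ℝ)) ((1 - t) ^ (-(3/2):ℝ)) t := by
    intro t ht
    rw [uIcc_of_le h0] at ht
    have hc : (1:ℝ) - t ≠ 0 := (hposc t ht).ne'
    have h1' : HasDerivAt (fun s : ℝ => 1 - s) (-1) t := (hasDerivAt_id t).const_sub 1
    have h2 : HasDerivAt (fun s : ℝ => (1 - s) ^ (-(1/2):ℝ))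
        ((-(1/2) * (1 - t) ^ (-(1/2) - 1 : ℝ)) * (-1)) t :=
      (Real.hasDerivAt_rpow_const (Or.inl hc)).comp t h1'
    have h3 := h2.const_mul (2:ℝ)
    refine h3.congr_deriv ?_
    rw [show (-(1/2) - 1 : ℝ) = -(3/2) by norm_num]
    ring
  have hcinv : ContinuousOn (fun t : ℝ => (1 - t^2)⁻¹) (Icc 0 y) := by
    apply ((continuous_const.sub (continuous_pow 2)).continuousOn).inv₀
    intro t ht
    have : (0:ℝ) < 1 - t^2 := by nlinarith [ht.1, ht.2]
    exact this.ne'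
  have hcrpow : ContinuousOn (fun t : ℝ => (1 - t) ^ (-(3/2):ℝ)) (Icc 0 y) := by
    apply ContinuousOn.rpow_const ((continuous_const.sub continuous_id).continuousOn)
    intro t ht
    exact Or.inl (hposc t ht).ne'
  have hint : ∫ t in (0:ℝ)..y, (1 - t) ^ (-(3/2):ℝ)
      = 2 * (1-y) ^ (-(1/2):ℝ) - 2 * (1-0:ℝ) ^ (-(1/2):ℝ) :=
    intervalIntegral.integral_eq_sub_of_hasDerivAt hG
      ((uIcc_of_le h0 ▸ hcrpow).intervalIntegrable)
  have hmono : ∫ t in (0:ℝ)..y, (1 - t^2)⁻¹ ≤ ∫ t in (0:ℝ)..y, (1 - t) ^ (-(3/2):ℝ) :=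
    intervalIntegral.integral_mono_on h0 ((uIcc_of_le h0 ▸ hcinv).intervalIntegrable)
      ((uIcc_of_le h0 ▸ hcrpow).intervalIntegrable) hpt
  have hone : ((1:ℝ) - 0) ^ (-(1/2):ℝ) = 1 := by
    norm_num
  have hnn : (0:ℝ) ≤ (1-y) ^ (-(1/2):ℝ) := Real.rpow_nonneg (by linarith) _
  calc ∫ t in (0:ℝ)..y, (1 - t^2)⁻¹ ≤ ∫ t in (0:ℝ)..y, (1 - t) ^ (-(3/2):ℝ) := hmono
    _ = 2 * (1-y) ^ (-(1/2):ℝ) - 2 := by rw [hint, hone]; ring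
    _ ≤ 2 * (1-y) ^ (-(1/2):ℝ) := by linarith

/-- Tail integral of the majorant. -/
lemma keyF {a : ℝ} (h0 : 0 ≤ a) (h1 : a < 1) :
    ∫⁻ y in Ioo a 1, ENNReal.ofReal ((1 - y) ^ (-(1/2):ℝ))
      ≤ ENNReal.ofReal (2 * Real.sqrt (1 - a)) := by
  have hii : IntervalIntegrable (fun y : ℝ => (1 - y) ^ (-(1/2):ℝ)) volume a 1 := by
    have h := intervalIntegral.intervalIntegrable_rpow' (a := 0) (b := 1 - a)
      (by norm_num : (-1:ℝ) < -(1/2))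
    have h2 := h.comp_sub_left 1
    simpa using h2.symm
  have hInt : IntegrableOn (fun y : ℝ => (1 - y) ^ (-(1/2):ℝ)) (Ioo a 1) :=
    ((intervalIntegrable_iff_integrableOn_Ioc_of_le h1.le).mp hii).mono_set
      Ioo_subset_Ioc_self
  have hnn : 0 ≤ᵐ[volume.restrict (Ioo a 1)] fun y : ℝ => (1 - y) ^ (-(1/2):ℝ) :=
    (ae_restrict_iff' measurableSet_Ioo).mpr
      (ae_of_all _ fun y hy => Real.rpow_nonneg (by linarith [hy.2]) _)
  have heq := MeasureTheory.ofReal_integral_eq_lintegral_ofReal hInt hnn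
  rw [← heq]
  apply ENNReal.ofReal_le_ofReal
  have hcalc : ∫ y in a..(1:ℝ), (1 - y) ^ (-(1/2):ℝ) = 2 * Real.sqrt (1 - a) := by
    rw [intervalIntegral.integral_comp_sub_left (fun x : ℝ => x ^ (-(1/2):ℝ)) 1]
    rw [integral_rpow (Or.inl (by norm_num))]
    rw [Real.sqrt_eq_rpow]
    norm_num [Real.zero_rpow]
    ring
  have h2 : ∫ y in Ioo a 1, (1 - y) ^ (-(1/2):ℝ) = ∫ y in a..(1:ℝ), (1 - y) ^ (-(1/2):ℝ) := by
    rw [intervalIntegral.integral_of_le h1.le, MeasureTheory.integral_Ioc_eq_integral_Ioo]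
  rw [h2, hcalc]

/-- Reflection of a lower Lebesgue integral. -/
lemma keyG (h : ℝ → ℝ≥0∞) (a b : ℝ) :
    ∫⁻ y in Ioo (-b) (-a), h y = ∫⁻ y in Ioo a b, h (-y) := by
  have hmp : MeasurePreserving (fun y : ℝ => -y) volume volume :=
    Measure.measurePreserving_neg volume
  have hme : MeasurableEmbedding (fun y : ℝ => -y) :=
    (MeasurableEquiv.neg ℝ).measurableEmbedding
  have hpre : (fun y : ℝ => -y) ⁻¹' (Ioo (-b) (-a)) = Ioo a b := by
    ext x
    simp only [mem_preimage, mem_Ioo]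
    constructor
    · rintro ⟨h1, h2⟩; constructor <;> linarith
    · rintro ⟨h1, h2⟩; constructor <;> linarith
  have hmap : volume.restrict (Ioo (-b) (-a))
      = Measure.map (fun y : ℝ => -y) (volume.restrict (Ioo a b)) := by
    conv_lhs => rw [← hmp.map_eq]
    rw [Measure.restrict_map measurable_neg measurableSet_Ioo, hpre]
  rw [hmap, hme.lintegral_map]

/-- Compactness (Lemma `lem:compact`): a sequence of odd `C¹` functions on `(-1,1)` with
uniformly bounded weighted energy `∫ (1-y²)|fₙ'|² ≤ M` has a subsequence that is Cauchy
in `L²(-1,1)`. -/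
theorem stmt1 (f f' : ℕ → ℝ → ℂ) (M : ℝ) (hM : 0 < M)
    (hderiv : ∀ n, ∀ y ∈ Ioo (-1:ℝ) 1, HasDerivAt (f n) (f' n y) y)
    (hcont : ∀ n, ContinuousOn (f' n) (Ioo (-1:ℝ) 1))
    (hodd : ∀ n, ∀ y ∈ Ioo (-1:ℝ) 1, f n (-y) = - f n y)
    (hbound : ∀ n, (∫⁻ y in Ioo (-1:ℝ) 1, ENNReal.ofReal ((1 - y^2) * ‖f' n y‖^2))
        ≤ ENNReal.ofReal M) :
    ∃ φ : ℕ → ℕ, StrictMono φ ∧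
      ∀ ε : ℝ, 0 < ε → ∃ N : ℕ, ∀ k ≥ N, ∀ l ≥ N,
        eLpNorm (f (φ k) - f (φ l)) 2 (volume.restrict (Ioo (-1:ℝ) 1))
          < ENNReal.ofReal ε := by
  classical
  have hD : ∀ n, ∀ y ∈ Ioo (-1:ℝ) 1,
      ‖f n y‖^2 ≤ M * ∫ t in (0:ℝ)..|y|, (1 - t^2)⁻¹ :=
    fun n => keyD (f n) (f' n) M hM (hderiv n) (hcont n) (hodd n) (hbound n)
  set B : ℚ → ℝ := fun q => Real.sqrt (M * ∫ t in (0:ℝ)..|(q:ℝ)|, (1 - t^2)⁻¹) with hB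
  set x : ℕ → ℚ → ℂ := fun n q => if (q:ℝ) ∈ Ioo (-1:ℝ) 1 then f n q else 0 with hx
  have hxmem : ∀ n, x n ∈ Set.pi univ (fun q => Metric.closedBall (0:ℂ) (B q)) := by
    intro n q _
    rw [Metric.mem_closedBall, dist_zero_right]
    by_cases hq : (q:ℝ) ∈ Ioo (-1:ℝ) 1
    · rw [hx]
      simp only [hq, if_true]
      rw [hB]
      exact Real.le_sqrt_of_sq_le (hD n q hq)
    · rw [hx]
      simp only [hq, if_false, norm_zero, hB]
      exact Real.sqrt_nonneg _
  have hcomp : IsCompact (Set.pi univ fun q : ℚ => Metric.closedBall (0:ℂ) (B q)) :=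
    isCompact_univ_pi fun q => isCompact_closedBall _ _
  obtain ⟨G, -, φ, hφ, hconv⟩ := hcomp.tendsto_subseq hxmem
  refine ⟨φ, hφ, ?_⟩
  have hconv' : ∀ q : ℚ, Filter.Tendsto (fun k => x (φ k) q) Filter.atTop (nhds (G q)) :=
    fun q => tendsto_pi_nhds.mp hconv q
  intro ε hε
  -- parameters
  set η := ε / 3 with hη
  have hηpos : 0 < η := by rw [hη]; linarith only [hε]
  obtain ⟨a, ha0, ha1, hsa⟩ : ∃ a : ℝ, 0 < a ∧ a < 1 ∧ Real.sqrt (1-a) ≤ ε^2/(128*M) := by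
    refine ⟨1 - min ((ε^2 / (128 * M))^2) (1/2), ?_, ?_, ?_⟩
    · have h := min_le_right ((ε^2 / (128 * M))^2) (1/2)
      linarith only [h]
    · have h := lt_min (show 0 < (ε^2 / (128 * M))^2 by positivity)
        (show (0:ℝ) < 1/2 by norm_num)
      linarith only [h]
    · rw [show (1:ℝ) - (1 - min ((ε^2 / (128 * M))^2) (1/2))
        = min ((ε^2 / (128 * M))^2) (1/2) by ring]
      calc Real.sqrt (min ((ε^2/(128*M))^2) (1/2))
          ≤ Real.sqrt ((ε^2/(128*M))^2) := Real.sqrt_le_sqrt (min_le_left _ _)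
        _ = ε^2/(128*M) := Real.sqrt_sq (by positivity)
  obtain ⟨b, hab, hb1, hb0⟩ : ∃ b : ℝ, a < b ∧ b < 1 ∧ 0 < b :=
    ⟨(1+a)/2, by linarith only [ha1], by linarith only [ha1], by linarith only [ha0]⟩
  have hbb : 0 < 1 - b^2 := by nlinarith only [hb0, hb1]
  obtain ⟨r, hrpos, hrM⟩ : ∃ r : ℝ, 0 < r ∧ r * M = η/3 :=
    ⟨η/(3*M), by positivity, by field_simp⟩
  obtain ⟨δ, hδpos, hδba, hδr⟩ : ∃ δ : ℝ, 0 < δ ∧ δ ≤ b - a ∧ δ ≤ r * (1 - b^2) * η / 3 :=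
    ⟨min (r * (1 - b^2) * η / 3) (b - a),
      lt_min (by positivity) (by linarith only [hab]), min_le_right _ _, min_le_left _ _⟩
  obtain ⟨K, hK⟩ := exists_nat_ge (1/δ)
  have hKpos : (0:ℝ) < K := lt_of_lt_of_le (by positivity) hK
  have hKinv : 1/(K:ℝ) ≤ δ := by
    rw [div_le_iff₀ hKpos]
    have h := (div_le_iff₀ hδpos).mp hK
    linarith only [h]
  -- uniform closeness at grid points
  have hev : ∀ᶠ k in Filter.atTop, ∀ i ∈ Finset.Icc (-(K:ℤ)) (K:ℤ),
      ‖x (φ k) ((i:ℚ)/(K:ℚ)) - G ((i:ℚ)/(K:ℚ))‖ < η/6 := by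
    rw [Filter.eventually_all_finset]
    intro i _
    have h1 := Metric.tendsto_atTop.mp (hconv' ((i:ℚ)/(K:ℚ))) (η/6) (by linarith only [hηpos])
    obtain ⟨N0, hN0⟩ := h1
    refine Filter.eventually_atTop.mpr ⟨N0, fun k hk => ?_⟩
    rw [← dist_eq_norm]
    exact hN0 k hk
  obtain ⟨N, hN⟩ := Filter.eventually_atTop.mp hev
  refine ⟨N, ?_⟩
  -- sup bound on the middle interval
  have hsup : ∀ k' ≥ N, ∀ l' ≥ N, ∀ y ∈ Icc (-a) a,
      ‖f (φ k') y - f (φ l') y‖ ≤ η := by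
    intro k' hk' l' hl' y hy
    set i : ℤ := ⌊y * K⌋ with hi
    set q : ℚ := (i:ℚ)/(K:ℚ) with hq
    have hqr : (q:ℝ) = (i:ℝ)/(K:ℝ) := by
      rw [hq]; push_cast; ring
    have hfl1 : (i:ℝ) ≤ y * K := Int.floor_le _
    have hfl2 : y * K < (i:ℝ) + 1 := Int.lt_floor_add_one _
    have haK : a * (K:ℝ) ≤ (K:ℝ) := by
      have h := mul_nonneg (sub_nonneg.mpr ha1.le) hKpos.le
      linarith only [h]
    have hyK1 : (-a) * (K:ℝ) ≤ y * (K:ℝ) := mul_le_mul_of_nonneg_right hy.1 hKpos.le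
    have hyK2 : y * (K:ℝ) ≤ a * (K:ℝ) := mul_le_mul_of_nonneg_right hy.2 hKpos.le
    have hiK : i ∈ Finset.Icc (-(K:ℤ)) (K:ℤ) := by
      rw [Finset.mem_Icc]
      constructor
      · have h1 : (-(K:ℝ)) - 1 < (i:ℝ) := by linarith only [hfl2, hyK1, haK]
        have h2 : (-(K:ℤ)) - 1 < i := by exact_mod_cast h1
        omega
      · have h1 : (i:ℝ) ≤ (K:ℝ) := by linarith only [hfl1, hyK2, haK]
        exact_mod_cast h1
    have hqley : (q:ℝ) ≤ y := by
      rw [hqr, div_le_iff₀ hKpos]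
      linarith only [hfl1]
    have hygap : y - (q:ℝ) ≤ δ := by
      rw [hqr]
      have h6 : y ≤ ((i:ℝ) + 1)/(K:ℝ) := by
        rw [le_div_iff₀ hKpos]
        linarith only [hfl2]
      have h7 : ((i:ℝ)+1)/(K:ℝ) = (i:ℝ)/(K:ℝ) + 1/(K:ℝ) := by ring
      linarith only [h6, h7, hKinv]
    have hqb : -b ≤ (q:ℝ) := by
      have h8 : y - δ ≤ (q:ℝ) := by linarith only [hygap]
      linarith only [h8, hy.1, hδba]
    have hqb2 : (q:ℝ) ≤ b := le_trans hqley (le_trans hy.2 hab.le)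
    have hqIoo : (q:ℝ) ∈ Ioo (-1:ℝ) 1 :=
      ⟨by linarith only [hqb, hb1], by linarith only [hqb2, hb1]⟩
    have hxq : ∀ n, x n q = f n (q:ℝ) := by
      intro n
      rw [hx]
      simp only [hqIoo, if_true]
    -- equicontinuity estimate
    have hequi : ∀ n, ‖f n y - f n (q:ℝ)‖ ≤ η/3 := by
      intro n
      have hykey := keyB (f n) (f' n) M hM.le (hderiv n) (hcont n) (hbound n)
        (u := (q:ℝ)) (v := y) (by linarith only [hqb, hb1]) hqley
        (by linarith only [hy.2, ha1]) hrpos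
      have hIb : ∀ t ∈ Icc (q:ℝ) y, (1 - t^2)⁻¹ ≤ (1 - b^2)⁻¹ := by
        intro t ht
        have h1 : -b ≤ t := le_trans hqb ht.1
        have h2 : t ≤ b := le_trans ht.2 (le_trans hy.2 hab.le)
        apply inv_anti₀ hbb
        nlinarith only [h1, h2]
      have hcinv : ContinuousOn (fun t : ℝ => (1 - t^2)⁻¹) (Icc (q:ℝ) y) := by
        apply ((continuous_const.sub (continuous_pow 2)).continuousOn).inv₀
        intro t ht
        have h1 : -b ≤ t := le_trans hqb ht.1
        have h2 : t ≤ b := le_trans ht.2 (le_trans hy.2 hab.le)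
        have h3 : (0:ℝ) < 1 - t^2 := by nlinarith only [h1, h2, hb0, hb1]
        exact h3.ne'
      have hIb2 : ∫ t in (q:ℝ)..y, (1 - t^2)⁻¹ ≤ (y - (q:ℝ)) * (1 - b^2)⁻¹ := by
        have hIcc2 : uIcc (q:ℝ) y = Icc (q:ℝ) y := uIcc_of_le hqley
        have hInt1 : IntervalIntegrable (fun t : ℝ => (1 - t^2)⁻¹) volume (q:ℝ) y :=
          (hIcc2 ▸ hcinv).intervalIntegrable
        have hInt2 : IntervalIntegrable (fun _ : ℝ => (1 - b^2)⁻¹) volume (q:ℝ) y :=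
          intervalIntegrable_const
        have h3 := intervalIntegral.integral_mono_on hqley hInt1 hInt2 hIb
        simpa [intervalIntegral.integral_const, smul_eq_mul] using h3
      have hterm2 : (1/r) * ∫ t in (q:ℝ)..y, (1 - t^2)⁻¹ ≤ η/3 := by
        have h4 : (1/r) * ∫ t in (q:ℝ)..y, (1 - t^2)⁻¹ ≤ (1/r) * (δ * (1 - b^2)⁻¹) := by
          apply mul_le_mul_of_nonneg_left _ (by positivity)
          calc ∫ t in (q:ℝ)..y, (1 - t^2)⁻¹ ≤ (y - (q:ℝ)) * (1 - b^2)⁻¹ := hIb2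
            _ ≤ δ * (1 - b^2)⁻¹ := mul_le_mul_of_nonneg_right hygap (by positivity)
        have h5 : (1/r) * (δ * (1 - b^2)⁻¹) ≤ η/3 := by
          have he : (1/r) * (δ * (1 - b^2)⁻¹) = δ / (r * (1 - b^2)) := by
            field_simp
          rw [he, div_le_iff₀ (by positivity : (0:ℝ) < r * (1 - b^2))]
          calc δ ≤ r * (1 - b^2) * η / 3 := hδr
            _ = η / 3 * (r * (1 - b^2)) := by ring
        linarith only [h4, h5]
      calc ‖f n y - f n (q:ℝ)‖
          ≤ (r * M + (1/r) * ∫ t in (q:ℝ)..y, (1 - t^2)⁻¹) / 2 := hykey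
        _ ≤ η/3 := by
          rw [hrM]
          linarith only [hterm2]
    have hgrid1 := hN k' hk' i hiK
    have hgrid2 := hN l' hl' i hiK
    rw [← hq] at hgrid1 hgrid2
    have hdecomp : f (φ k') y - f (φ l') y
        = (f (φ k') y - f (φ k') (q:ℝ))
          + ((x (φ k') q - G q) + ((G q - x (φ l') q) + (f (φ l') (q:ℝ) - f (φ l') y))) := by
      rw [hxq (φ k'), hxq (φ l')]
      ring
    rw [hdecomp]
    have hb1' := norm_add_le (f (φ k') y - f (φ k') (q:ℝ))
      ((x (φ k') q - G q) + ((G q - x (φ l') q) + (f (φ l') (q:ℝ) - f (φ l') y)))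
    have hb2' := norm_add_le (x (φ k') q - G q)
      ((G q - x (φ l') q) + (f (φ l') (q:ℝ) - f (φ l') y))
    have hb3' := norm_add_le (G q - x (φ l') q) (f (φ l') (q:ℝ) - f (φ l') y)
    have t1 := hequi (φ k')
    have t2 : ‖f (φ l') (q:ℝ) - f (φ l') y‖ ≤ η/3 := by
      rw [norm_sub_rev]
      exact hequi (φ l')
    have t3 : ‖G q - x (φ l') q‖ ≤ η/6 := by
      rw [norm_sub_rev]
      exact hgrid2.le
    have t4 := hgrid1.le
    linarith only [hb1', hb2', hb3', t1, t2, t3, t4]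
  intro k hk l hl
  set g : ℝ → ℂ := fun y => f (φ k) y - f (φ l) y with hg
  -- pointwise identity for squared enorm
  have hpt : ∀ z : ℂ, (‖z‖₊ : ℝ≥0∞) ^ (2:ℝ) = ENNReal.ofReal (‖z‖^2) := by
    intro z
    rw [← enorm_eq_nnnorm, ← ofReal_norm,
      ENNReal.ofReal_rpow_of_nonneg (norm_nonneg z) (by norm_num : (0:ℝ) ≤ 2)]
    congr 1
    rw [show ((2:ℝ)) = ((2:ℕ):ℝ) by norm_num, Real.rpow_natCast]
  -- tail pointwise bound
  have htailpt : ∀ m, ∀ y ∈ Ioo a 1, ‖f m y‖^2 ≤ 2*M*(1-y) ^ (-(1/2):ℝ) := by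
    intro m y hy
    have hyI : y ∈ Ioo (-1:ℝ) 1 := ⟨by linarith only [hy.1, ha0], hy.2⟩
    have h1 := hD m y hyI
    have h2 : ∫ t in (0:ℝ)..|y|, (1 - t^2)⁻¹ ≤ 2*(1-y) ^ (-(1/2):ℝ) := by
      rw [abs_of_nonneg (by linarith only [hy.1, ha0] : (0:ℝ) ≤ y)]
      exact keyE (by linarith only [hy.1, ha0]) hy.2
    calc ‖f m y‖^2 ≤ M * ∫ t in (0:ℝ)..|y|, (1 - t^2)⁻¹ := h1
      _ ≤ M * (2*(1-y) ^ (-(1/2):ℝ)) := mul_le_mul_of_nonneg_left h2 hM.le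
      _ = 2*M*(1-y) ^ (-(1/2):ℝ) := by ring
  -- tail bound for g on the positive side
  have htail : ∫⁻ y in Ioo a 1, ENNReal.ofReal (‖g y‖^2)
      ≤ ENNReal.ofReal (16*M*Real.sqrt (1-a)) := by
    have hmono : ∀ y ∈ Ioo a 1,
        ENNReal.ofReal (‖g y‖^2) ≤ ENNReal.ofReal (8*M*(1-y) ^ (-(1/2):ℝ)) := by
      intro y hy
      apply ENNReal.ofReal_le_ofReal
      have h1 := htailpt (φ k) y hy
      have h2 := htailpt (φ l) y hy
      have h3 : ‖g y‖ ≤ ‖f (φ k) y‖ + ‖f (φ l) y‖ := norm_sub_le _ _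
      nlinarith only [h1, h2, h3, norm_nonneg (f (φ k) y), norm_nonneg (f (φ l) y),
        norm_nonneg (g y), sq_nonneg (‖f (φ k) y‖ - ‖f (φ l) y‖)]
    calc ∫⁻ y in Ioo a 1, ENNReal.ofReal (‖g y‖^2)
        ≤ ∫⁻ y in Ioo a 1, ENNReal.ofReal (8*M*(1-y) ^ (-(1/2):ℝ)) :=
          lintegral_mono_ae ((ae_restrict_iff' measurableSet_Ioo).mpr (ae_of_all _ hmono))
      _ = ∫⁻ y in Ioo a 1, ENNReal.ofReal (8*M) * ENNReal.ofReal ((1-y) ^ (-(1/2):ℝ)) := by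
          apply lintegral_congr
          intro y
          rw [← ENNReal.ofReal_mul (by positivity)]
      _ = ENNReal.ofReal (8*M) * ∫⁻ y in Ioo a 1, ENNReal.ofReal ((1-y) ^ (-(1/2):ℝ)) :=
          lintegral_const_mul' _ _ ENNReal.ofReal_ne_top
      _ ≤ ENNReal.ofReal (8*M) * ENNReal.ofReal (2*Real.sqrt (1-a)) := by
          gcongr
          exact keyF ha0.le ha1
      _ = ENNReal.ofReal (16*M*Real.sqrt (1-a)) := by
          rw [← ENNReal.ofReal_mul (by positivity)]
          congr 1
          ring
  -- tail bound on the negative side, by reflection and oddness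
  have htneg : ∫⁻ y in Ioo (-1:ℝ) (-a), ENNReal.ofReal (‖g y‖^2)
      ≤ ENNReal.ofReal (16*M*Real.sqrt (1-a)) := by
    have hrefl := keyG (fun y => ENNReal.ofReal (‖g y‖^2)) a 1
    rw [hrefl]
    have hcong : ∫⁻ y in Ioo a 1, ENNReal.ofReal (‖g (-y)‖^2)
        = ∫⁻ y in Ioo a 1, ENNReal.ofReal (‖g y‖^2) := by
      apply lintegral_congr_ae
      refine (ae_restrict_iff' measurableSet_Ioo).mpr (ae_of_all _ fun y hy => ?_)
      have hyI : y ∈ Ioo (-1:ℝ) 1 := ⟨by linarith only [hy.1, ha0], hy.2⟩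
      have h1 := hodd (φ k) y hyI
      have h2 := hodd (φ l) y hyI
      rw [hg]
      simp only
      rw [h1, h2, show -f (φ k) y - -f (φ l) y = -(f (φ k) y - f (φ l) y) by ring, norm_neg]
    rw [hcong]
    exact htail
  -- middle bound
  have hmid : ∫⁻ y in Icc (-a) a, ENNReal.ofReal (‖g y‖^2) ≤ ENNReal.ofReal (2*η^2) := by
    have hmono : ∀ y ∈ Icc (-a) a, ENNReal.ofReal (‖g y‖^2) ≤ ENNReal.ofReal (η^2) := by
      intro y hy
      apply ENNReal.ofReal_le_ofReal
      have h1 := hsup k hk l hl y hy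
      nlinarith only [h1, norm_nonneg (g y)]
    calc ∫⁻ y in Icc (-a) a, ENNReal.ofReal (‖g y‖^2)
        ≤ ∫⁻ _ in Icc (-a) a, ENNReal.ofReal (η^2) :=
          lintegral_mono_ae ((ae_restrict_iff' measurableSet_Icc).mpr (ae_of_all _ hmono))
      _ = ENNReal.ofReal (η^2) * volume (Icc (-a) a) := by
          rw [MeasureTheory.setLIntegral_const]
      _ = ENNReal.ofReal (η^2) * ENNReal.ofReal (2*a) := by
          rw [Real.volume_Icc]
          congr 1
          ring
      _ ≤ ENNReal.ofReal (η^2) * ENNReal.ofReal 2 := by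
          gcongr
          linarith only [ha1]
      _ = ENNReal.ofReal (2*η^2) := by
          rw [← ENNReal.ofReal_mul (by positivity)]
          congr 1
          ring
  -- combine
  have hsplit : (∫⁻ y in Ioo (-1:ℝ) 1, ENNReal.ofReal (‖g y‖^2))
      ≤ (∫⁻ y in Ioo (-1:ℝ) (-a), ENNReal.ofReal (‖g y‖^2))
        + (∫⁻ y in Icc (-a) a, ENNReal.ofReal (‖g y‖^2))
        + (∫⁻ y in Ioo a 1, ENNReal.ofReal (‖g y‖^2)) := by
    have hsub : Ioo (-1:ℝ) 1 ⊆ (Ioo (-1:ℝ) (-a) ∪ Icc (-a) a) ∪ Ioo a 1 := by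
      intro y hy
      rcases lt_or_ge y (-a) with h1 | h1
      · exact Or.inl (Or.inl ⟨hy.1, h1⟩)
      rcases le_or_gt y a with h2 | h2
      · exact Or.inl (Or.inr ⟨h1, h2⟩)
      · exact Or.inr ⟨h2, hy.2⟩
    refine le_trans (lintegral_mono_set hsub) ?_
    refine le_trans (lintegral_union_le _ _ _) ?_
    exact add_le_add (lintegral_union_le _ _ _) le_rfl
  have h1 : 16*M*Real.sqrt (1-a) ≤ ε^2/8 := by
    calc 16*M*Real.sqrt (1-a) ≤ 16*M*(ε^2/(128*M)) := by
          apply mul_le_mul_of_nonneg_left hsa (by positivity)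
      _ = ε^2/8 := by field_simp; ring
  have h2 : 2*η^2 ≤ ε^2/4 := by
    rw [hη]
    nlinarith only [sq_nonneg ε]
  have htot : ∫⁻ y in Ioo (-1:ℝ) 1, ENNReal.ofReal (‖g y‖^2) ≤ ENNReal.ofReal (ε^2/2) := by
    refine le_trans hsplit ?_
    calc (∫⁻ y in Ioo (-1:ℝ) (-a), ENNReal.ofReal (‖g y‖^2))
          + (∫⁻ y in Icc (-a) a, ENNReal.ofReal (‖g y‖^2))
          + (∫⁻ y in Ioo a 1, ENNReal.ofReal (‖g y‖^2))
        ≤ ENNReal.ofReal (ε^2/8) + ENNReal.ofReal (ε^2/4) + ENNReal.ofReal (ε^2/8) :=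
          add_le_add (add_le_add (le_trans htneg (ENNReal.ofReal_le_ofReal h1))
            (le_trans hmid (ENNReal.ofReal_le_ofReal h2)))
            (le_trans htail (ENNReal.ofReal_le_ofReal h1))
      _ = ENNReal.ofReal (ε^2/2) := by
          rw [← ENNReal.ofReal_add (by positivity) (by positivity),
            ← ENNReal.ofReal_add (by positivity) (by positivity)]
          congr 1
          ring
  -- conclude
  have hlp : eLpNorm (f (φ k) - f (φ l)) 2 (volume.restrict (Ioo (-1:ℝ) 1))
      = (∫⁻ y in Ioo (-1:ℝ) 1, ENNReal.ofReal (‖g y‖^2)) ^ (1/(2:ℝ)) := by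
    rw [MeasureTheory.eLpNorm_eq_lintegral_rpow_enorm_toReal (by norm_num) (by norm_num),
      show ((2:ℝ≥0∞).toReal) = (2:ℝ) by norm_num]
    congr 1
    apply lintegral_congr
    intro y
    rw [Pi.sub_apply]
    exact hpt (g y)
  rw [hlp]
  calc (∫⁻ y in Ioo (-1:ℝ) 1, ENNReal.ofReal (‖g y‖^2)) ^ (1/(2:ℝ))
      ≤ (ENNReal.ofReal (ε^2/2)) ^ (1/(2:ℝ)) := ENNReal.rpow_le_rpow htot (by norm_num)
    _ = ENNReal.ofReal ((ε^2/2) ^ (1/(2:ℝ))) :=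
        ENNReal.ofReal_rpow_of_nonneg (by positivity) (by norm_num)
    _ < ENNReal.ofReal ε := by
        rw [ENNReal.ofReal_lt_ofReal_iff hε, ← Real.sqrt_eq_rpow,
          Real.sqrt_lt' hε]
        nlinarith only [pow_pos hε 2]
end

section
/- Let f,g ∈ C^∞((−1,1)). Then u_{f,g} belongs to C^∞([0,∞)×(−1,1)), satisfies u_{f,g}(0,y) = f(y) and ∂_s u_{f,g}(s,y)|_{s=0} = g(y) for all y ∈ (−1,1), and satisfies [∂_s² + 2y ∂_s∂_y + ∂_s − (1−y²)∂_y² + 2y ∂_y] u_{f,g}(s,y) = 0 for all (s,y) ∈ (0,∞)×(−1,1). -/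
open MeasureTheory Set ENNReal

/-- The explicit solution `u_{f,g}` of the hyperboloidal initial value problem for the
free wave equation. -/
noncomputable def ufg (f g : ℝ → ℂ) (s y : ℝ) : ℂ :=
  f 0 - (1/2) * (∫ x in (-1 + Real.exp (-s) * (1 + y))..(0:ℝ), (1 - (x:ℂ)) * deriv f x)
      + (1/2) * (∫ x in (0:ℝ)..(1 - Real.exp (-s) * (1 - y)), (1 + (x:ℂ)) * deriv f x)
      + (1/2) * (∫ x in (-1 + Real.exp (-s) * (1 + y))..(1 - Real.exp (-s) * (1 - y)), g x)

/-- Partial derivative in the first (time-like) variable. -/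
noncomputable def dS (u : ℝ → ℝ → ℂ) (s y : ℝ) : ℂ := deriv (fun s' => u s' y) s

/-- Partial derivative in the second (space-like) variable. -/
noncomputable def dY (u : ℝ → ℝ → ℂ) (s y : ℝ) : ℂ := deriv (fun y' => u s y') y

/-- The hyperboloidal wave operator
`∂_s² + 2y ∂_s∂_y + ∂_s − (1−y²)∂_y² + 2y ∂_y`. -/
noncomputable def waveOp (u : ℝ → ℝ → ℂ) (s y : ℝ) : ℂ :=
  dS (dS u) s y + 2 * (y:ℂ) * dS (dY u) s y + dS u s y
    - (1 - (y:ℂ)^2) * dY (dY u) s y + 2 * (y:ℂ) * dY u s y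

/-! ### Auxiliary machinery -/

open intervalIntegral

noncomputable def prim (h : ℝ → ℂ) (t : ℝ) : ℂ := ∫ x in (0:ℝ)..t, h x

lemma intInt {h : ℝ → ℂ} (hh : ContinuousOn h (Ioo (-1:ℝ) 1)) {a b : ℝ}
    (ha : a ∈ Ioo (-1:ℝ) 1) (hb : b ∈ Ioo (-1:ℝ) 1) : IntervalIntegrable h volume a b :=
  (hh.mono (Set.ordConnected_Ioo.uIcc_subset ha hb)).intervalIntegrable

lemma prim_hasDerivAt {h : ℝ → ℂ} (hh : ContinuousOn h (Ioo (-1:ℝ) 1)) {t : ℝ}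
    (ht : t ∈ Ioo (-1:ℝ) 1) : HasDerivAt (prim h) (h t) t :=
  integral_hasDerivAt_right (intInt hh (by norm_num) ht)
    (hh.stronglyMeasurableAtFilter isOpen_Ioo t ht) (hh.continuousAt (isOpen_Ioo.mem_nhds ht))

lemma prim_contDiffOn {h : ℝ → ℂ} (hh : ContDiffOn ℝ (⊤:ℕ∞) h (Ioo (-1:ℝ) 1)) :
    ContDiffOn ℝ (⊤:ℕ∞) (prim h) (Ioo (-1:ℝ) 1) := by
  rw [contDiffOn_infty_iff_deriv_of_isOpen isOpen_Ioo]
  exact ⟨fun t ht => ((prim_hasDerivAt hh.continuousOn ht).differentiableAt).differentiableWithinAt,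
    hh.congr fun t ht => ((prim_hasDerivAt hh.continuousOn ht).deriv)⟩

lemma deriv_contDiffOn {h : ℝ → ℂ} (hh : ContDiffOn ℝ (⊤:ℕ∞) h (Ioo (-1:ℝ) 1)) :
    ContDiffOn ℝ (⊤:ℕ∞) (deriv h) (Ioo (-1:ℝ) 1) :=
  hh.deriv_of_isOpen isOpen_Ioo (le_of_eq rfl)

noncomputable def aa (s y : ℝ) : ℝ := -1 + Real.exp (-s) * (1 + y)
noncomputable def bb (s y : ℝ) : ℝ := 1 - Real.exp (-s) * (1 - y)

noncomputable def Pf (f g : ℝ → ℂ) (t : ℝ) : ℂ :=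
  (1/2) * (prim (fun x => (1 - (x:ℂ)) * deriv f x) t - prim g t)
noncomputable def Qf (f g : ℝ → ℂ) (t : ℝ) : ℂ :=
  (1/2) * (prim (fun x => (1 + (x:ℂ)) * deriv f x) t + prim g t)
noncomputable def P1 (f g : ℝ → ℂ) (t : ℝ) : ℂ := (1/2) * ((1 - (t:ℂ)) * deriv f t - g t)
noncomputable def Q1 (f g : ℝ → ℂ) (t : ℝ) : ℂ := (1/2) * ((1 + (t:ℂ)) * deriv f t + g t)
noncomputable def P2 (f g : ℝ → ℂ) : ℝ → ℂ := deriv (P1 f g)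
noncomputable def Q2 (f g : ℝ → ℂ) : ℝ → ℂ := deriv (Q1 f g)

def VV : Set (ℝ × ℝ) := {p | aa p.1 p.2 ∈ Ioo (-1:ℝ) 1 ∧ bb p.1 p.2 ∈ Ioo (-1:ℝ) 1}

lemma VV_open : IsOpen VV := by
  have h1 : Continuous fun p : ℝ × ℝ => aa p.1 p.2 := by unfold aa; fun_prop
  have h2 : Continuous fun p : ℝ × ℝ => bb p.1 p.2 := by unfold bb; fun_prop
  have : VV = (fun p : ℝ × ℝ => aa p.1 p.2) ⁻¹' (Ioo (-1:ℝ) 1) ∩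
      (fun p : ℝ × ℝ => bb p.1 p.2) ⁻¹' (Ioo (-1:ℝ) 1) := rfl
  rw [this]
  exact (isOpen_Ioo.preimage h1).inter (isOpen_Ioo.preimage h2)

lemma mem_VV {s y : ℝ} (hs : 0 ≤ s) (hy : y ∈ Ioo (-1:ℝ) 1) : (s, y) ∈ VV := by
  obtain ⟨h1, h2⟩ := hy
  have he : 0 < Real.exp (-s) := Real.exp_pos _
  have he1 : Real.exp (-s) ≤ 1 := Real.exp_le_one_iff.mpr (by linarith)
  constructor <;> constructor <;> simp only [aa, bb] <;> nlinarith

lemma comp_cx {P : ℝ → ℂ} {p' : ℂ} {c : ℝ → ℝ} {c' x : ℝ} (hc : HasDerivAt c c' x)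
    (hP : HasDerivAt P p' (c x)) : HasDerivAt (fun x => P (c x)) ((c' : ℂ) * p') x := by
  simpa [Function.comp_def, Complex.real_smul] using hP.scomp x hc

lemma exp_neg_hasDerivAt (s : ℝ) :
    HasDerivAt (fun s' : ℝ => Real.exp (-s')) (-Real.exp (-s)) s := by
  simpa [Function.comp_def] using (Real.hasDerivAt_exp (-s)).comp s ((hasDerivAt_id s).neg)

lemma aa_hasDerivAt_s (s y : ℝ) :
    HasDerivAt (fun s' => aa s' y) (-(Real.exp (-s) * (1 + y))) s := by
  have := ((exp_neg_hasDerivAt s).mul_const (1 + y)).const_add (-1)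
  simpa [aa] using this

lemma bb_hasDerivAt_s (s y : ℝ) :
    HasDerivAt (fun s' => bb s' y) (Real.exp (-s) * (1 - y)) s := by
  have := HasDerivAt.const_sub 1 ((exp_neg_hasDerivAt s).mul_const (1 - y))
  simpa [bb] using this

lemma aa_hasDerivAt_y (s y : ℝ) :
    HasDerivAt (fun y' => aa s y') (Real.exp (-s)) y := by
  have := HasDerivAt.const_add (-1)
    (((hasDerivAt_id y).const_add 1).const_mul (Real.exp (-s)))
  simpa [aa] using this

lemma bb_hasDerivAt_y (s y : ℝ) :
    HasDerivAt (fun y' => bb s y') (Real.exp (-s)) y := by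
  have := HasDerivAt.const_sub 1
    (HasDerivAt.const_mul (Real.exp (-s)) (HasDerivAt.const_sub 1 (hasDerivAt_id y)))
  simpa [bb] using this

lemma exp_cx_hasDerivAt (s : ℝ) :
    HasDerivAt (fun s' : ℝ => ((Real.exp (-s') : ℝ) : ℂ)) (-(Real.exp (-s) : ℂ)) s := by
  have h := comp_cx (exp_neg_hasDerivAt s) (Complex.ofRealCLM.hasDerivAt)
  simpa using h

section

variable {f g : ℝ → ℂ}

lemma h1c (hf : ContDiffOn ℝ (⊤:ℕ∞) f (Ioo (-1:ℝ) 1)) :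
    ContinuousOn (fun x : ℝ => (1 - (x:ℂ)) * deriv f x) (Ioo (-1:ℝ) 1) :=
  ((continuous_const.sub Complex.continuous_ofReal).continuousOn).mul
    (deriv_contDiffOn hf).continuousOn

lemma h2c (hf : ContDiffOn ℝ (⊤:ℕ∞) f (Ioo (-1:ℝ) 1)) :
    ContinuousOn (fun x : ℝ => (1 + (x:ℂ)) * deriv f x) (Ioo (-1:ℝ) 1) :=
  ((continuous_const.add Complex.continuous_ofReal).continuousOn).mul
    (deriv_contDiffOn hf).continuousOn

lemma ufg_eq (hg : ContinuousOn g (Ioo (-1:ℝ) 1)) {s y : ℝ}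
    (hV : (s, y) ∈ VV) :
    ufg f g s y = f 0 + Pf f g (aa s y) + Qf f g (bb s y) := by
  obtain ⟨ha, hb⟩ := hV
  have h0 : (0:ℝ) ∈ Ioo (-1:ℝ) 1 := by norm_num
  have key : (∫ x in (aa s y)..(bb s y), g x) = prim g (bb s y) - prim g (aa s y) := by
    rw [← integral_interval_sub_left (intInt hg h0 hb) (intInt hg h0 ha)]; rfl
  have hsym : (∫ x in (aa s y)..(0:ℝ), (1 - (x:ℂ)) * deriv f x)
      = - prim (fun x => (1 - (x:ℂ)) * deriv f x) (aa s y) := by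
    rw [integral_symm]; rfl
  show ufg f g s y = _
  unfold ufg Pf Qf
  show _ - (1/2) * (∫ x in (aa s y)..(0:ℝ), (1 - (x:ℂ)) * deriv f x) + _
      + (1/2) * (∫ x in (aa s y)..(bb s y), g x) = _
  rw [key, hsym]
  show f 0 - (1/2) * (- prim (fun x => (1 - (x:ℂ)) * deriv f x) (aa s y))
      + (1/2) * (prim (fun x => (1 + (x:ℂ)) * deriv f x) (bb s y))
      + (1/2) * (prim g (bb s y) - prim g (aa s y)) = _
  generalize prim (fun x => (1 - (x:ℂ)) * deriv f x) (aa s y) = A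
  generalize prim (fun x => (1 + (x:ℂ)) * deriv f x) (bb s y) = B
  generalize prim g (aa s y) = C
  generalize prim g (bb s y) = D
  ring

variable (hf : ContDiffOn ℝ (⊤:ℕ∞) f (Ioo (-1:ℝ) 1))
    (hg : ContDiffOn ℝ (⊤:ℕ∞) g (Ioo (-1:ℝ) 1))
include hf hg

lemma Pf_hasDerivAt {t : ℝ} (ht : t ∈ Ioo (-1:ℝ) 1) :
    HasDerivAt (Pf f g) (P1 f g t) t :=
  ((prim_hasDerivAt (h1c hf) ht).sub (prim_hasDerivAt hg.continuousOn ht)).const_mul (1/2)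

lemma Qf_hasDerivAt {t : ℝ} (ht : t ∈ Ioo (-1:ℝ) 1) :
    HasDerivAt (Qf f g) (Q1 f g t) t :=
  ((prim_hasDerivAt (h2c hf) ht).add (prim_hasDerivAt hg.continuousOn ht)).const_mul (1/2)

lemma P1_contDiffOn : ContDiffOn ℝ (⊤:ℕ∞) (P1 f g) (Ioo (-1:ℝ) 1) := by
  unfold P1
  exact contDiffOn_const.mul
    (((contDiff_const.sub Complex.ofRealCLM.contDiff).contDiffOn.mul
      (deriv_contDiffOn hf)).sub hg)

lemma Q1_contDiffOn : ContDiffOn ℝ (⊤:ℕ∞) (Q1 f g) (Ioo (-1:ℝ) 1) := by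
  unfold Q1
  exact contDiffOn_const.mul
    (((contDiff_const.add Complex.ofRealCLM.contDiff).contDiffOn.mul
      (deriv_contDiffOn hf)).add hg)

lemma P1_hasDerivAt {t : ℝ} (ht : t ∈ Ioo (-1:ℝ) 1) :
    HasDerivAt (P1 f g) (P2 f g t) t :=
  (((P1_contDiffOn hf hg).differentiableOn (by simp)).differentiableAt
    (isOpen_Ioo.mem_nhds ht)).hasDerivAt

lemma Q1_hasDerivAt {t : ℝ} (ht : t ∈ Ioo (-1:ℝ) 1) :
    HasDerivAt (Q1 f g) (Q2 f g t) t :=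
  (((Q1_contDiffOn hf hg).differentiableOn (by simp)).differentiableAt
    (isOpen_Ioo.mem_nhds ht)).hasDerivAt

lemma ufg_hasDerivAt_s {s y : ℝ} (hV : (s, y) ∈ VV) :
    HasDerivAt (fun s' => ufg f g s' y)
      ((Real.exp (-s) : ℂ) * ((1 - (y:ℂ)) * Q1 f g (bb s y)
        - (1 + (y:ℂ)) * P1 f g (aa s y))) s := by
  have ha : aa s y ∈ Ioo (-1:ℝ) 1 := hV.1
  have hb : bb s y ∈ Ioo (-1:ℝ) 1 := hV.2
  have hev : ∀ᶠ s' in nhds s, (s', y) ∈ VV :=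
    (continuous_id.prodMk continuous_const).continuousAt.preimage_mem_nhds
      (VV_open.mem_nhds hV)
  have hcong : (fun s' => ufg f g s' y) =ᶠ[nhds s]
      fun s' => f 0 + Pf f g (aa s' y) + Qf f g (bb s' y) := by
    filter_upwards [hev] with s' hs' using ufg_eq hg.continuousOn hs'
  have hP := comp_cx (aa_hasDerivAt_s s y) (Pf_hasDerivAt hf hg ha)
  have hQ := comp_cx (bb_hasDerivAt_s s y) (Qf_hasDerivAt hf hg hb)
  have h := (hP.const_add (f 0)).add hQ
  refine HasDerivAt.congr_of_eventuallyEq ?_ hcong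
  convert h using 1
  · rfl
  push_cast
  ring

lemma ufg_hasDerivAt_y {s y : ℝ} (hV : (s, y) ∈ VV) :
    HasDerivAt (fun y' => ufg f g s y')
      ((Real.exp (-s) : ℂ) * (P1 f g (aa s y) + Q1 f g (bb s y))) y := by
  have ha : aa s y ∈ Ioo (-1:ℝ) 1 := hV.1
  have hb : bb s y ∈ Ioo (-1:ℝ) 1 := hV.2
  have hev : ∀ᶠ y' in nhds y, (s, y') ∈ VV :=
    (continuous_const.prodMk continuous_id).continuousAt.preimage_mem_nhds
      (VV_open.mem_nhds hV)
  have hcong : (fun y' => ufg f g s y') =ᶠ[nhds y]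
      fun y' => f 0 + Pf f g (aa s y') + Qf f g (bb s y') := by
    filter_upwards [hev] with y' hy' using ufg_eq hg.continuousOn hy'
  have hP := comp_cx (aa_hasDerivAt_y s y) (Pf_hasDerivAt hf hg ha)
  have hQ := comp_cx (bb_hasDerivAt_y s y) (Qf_hasDerivAt hf hg hb)
  have h := (hP.const_add (f 0)).add hQ
  refine HasDerivAt.congr_of_eventuallyEq ?_ hcong
  convert h using 1
  · rfl
  push_cast
  ring

lemma dS_eq {s y : ℝ} (hV : (s, y) ∈ VV) :
    dS (ufg f g) s y = (Real.exp (-s) : ℂ) * ((1 - (y:ℂ)) * Q1 f g (bb s y)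
      - (1 + (y:ℂ)) * P1 f g (aa s y)) :=
  (ufg_hasDerivAt_s hf hg hV).deriv

lemma dY_eq {s y : ℝ} (hV : (s, y) ∈ VV) :
    dY (ufg f g) s y = (Real.exp (-s) : ℂ) * (P1 f g (aa s y) + Q1 f g (bb s y)) :=
  (ufg_hasDerivAt_y hf hg hV).deriv

lemma DSf_hasDerivAt_s {s y : ℝ} (hV : (s, y) ∈ VV) :
    HasDerivAt (fun s' => (Real.exp (-s') : ℂ) * ((1 - (y:ℂ)) * Q1 f g (bb s' y)
        - (1 + (y:ℂ)) * P1 f g (aa s' y)))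
      ((Real.exp (-s) : ℂ)^2 * ((1 + (y:ℂ))^2 * P2 f g (aa s y)
          + (1 - (y:ℂ))^2 * Q2 f g (bb s y))
        + (Real.exp (-s) : ℂ) * ((1 + (y:ℂ)) * P1 f g (aa s y)
          - (1 - (y:ℂ)) * Q1 f g (bb s y))) s := by
  have ha : aa s y ∈ Ioo (-1:ℝ) 1 := hV.1
  have hb : bb s y ∈ Ioo (-1:ℝ) 1 := hV.2
  have hE := exp_cx_hasDerivAt s
  have hQ1 := comp_cx (bb_hasDerivAt_s s y) (Q1_hasDerivAt hf hg hb)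
  have hP1 := comp_cx (aa_hasDerivAt_s s y) (P1_hasDerivAt hf hg ha)
  have h := hE.mul ((hQ1.const_mul (1 - (y:ℂ))).sub (hP1.const_mul (1 + (y:ℂ))))
  refine h.congr_deriv ?_
  simp only [Pi.add_apply, Pi.mul_apply, Pi.sub_apply]
  push_cast
  ring

lemma DYf_hasDerivAt_s {s y : ℝ} (hV : (s, y) ∈ VV) :
    HasDerivAt (fun s' => (Real.exp (-s') : ℂ) * (P1 f g (aa s' y) + Q1 f g (bb s' y)))
      ((Real.exp (-s) : ℂ)^2 * ((1 - (y:ℂ)) * Q2 f g (bb s y)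
          - (1 + (y:ℂ)) * P2 f g (aa s y))
        - (Real.exp (-s) : ℂ) * (P1 f g (aa s y) + Q1 f g (bb s y))) s := by
  have ha : aa s y ∈ Ioo (-1:ℝ) 1 := hV.1
  have hb : bb s y ∈ Ioo (-1:ℝ) 1 := hV.2
  have hE := exp_cx_hasDerivAt s
  have hQ1 := comp_cx (bb_hasDerivAt_s s y) (Q1_hasDerivAt hf hg hb)
  have hP1 := comp_cx (aa_hasDerivAt_s s y) (P1_hasDerivAt hf hg ha)
  have h := hE.mul (hP1.add hQ1)
  refine h.congr_deriv ?_
  simp only [Pi.add_apply, Pi.mul_apply, Pi.sub_apply]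
  push_cast
  ring

lemma DYf_hasDerivAt_y {s y : ℝ} (hV : (s, y) ∈ VV) :
    HasDerivAt (fun y' => (Real.exp (-s) : ℂ) * (P1 f g (aa s y') + Q1 f g (bb s y')))
      ((Real.exp (-s) : ℂ)^2 * (P2 f g (aa s y) + Q2 f g (bb s y))) y := by
  have ha : aa s y ∈ Ioo (-1:ℝ) 1 := hV.1
  have hb : bb s y ∈ Ioo (-1:ℝ) 1 := hV.2
  have hQ1 := comp_cx (bb_hasDerivAt_y s y) (Q1_hasDerivAt hf hg hb)
  have hP1 := comp_cx (aa_hasDerivAt_y s y) (P1_hasDerivAt hf hg ha)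
  have h := (hP1.add hQ1).const_mul ((Real.exp (-s) : ℂ))
  refine h.congr_deriv ?_
  push_cast
  ring

end

/-- Existence (Lemma `lem:dAlembert`, existence part): for `f,g ∈ C^∞((-1,1))`, the
function `u_{f,g}` is smooth on `[0,∞)×(-1,1)`, attains the initial data `(f,g)`, and
solves the hyperboloidal free wave equation on `(0,∞)×(-1,1)`. -/
theorem stmt2 (f g : ℝ → ℂ)
    (hf : ContDiffOn ℝ (⊤:ℕ∞) f (Ioo (-1:ℝ) 1))
    (hg : ContDiffOn ℝ (⊤:ℕ∞) g (Ioo (-1:ℝ) 1)) :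
    ContDiffOn ℝ (⊤:ℕ∞) (fun p : ℝ × ℝ => ufg f g p.1 p.2) (Ici (0:ℝ) ×ˢ Ioo (-1:ℝ) 1) ∧
    (∀ y ∈ Ioo (-1:ℝ) 1, ufg f g 0 y = f y) ∧
    (∀ y ∈ Ioo (-1:ℝ) 1, derivWithin (fun s => ufg f g s y) (Ici (0:ℝ)) 0 = g y) ∧
    (∀ s ∈ Ioi (0:ℝ), ∀ y ∈ Ioo (-1:ℝ) 1, waveOp (ufg f g) s y = 0) := by
  have hsub : (Ici (0:ℝ) ×ˢ Ioo (-1:ℝ) 1) ⊆ VV := fun p hp => mem_VV hp.1 hp.2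
  refine ⟨?_, ?_, ?_, ?_⟩
  · -- smoothness
    have haa : ContDiff ℝ (⊤:ℕ∞) (fun p : ℝ × ℝ => aa p.1 p.2) := by unfold aa; fun_prop
    have hbb : ContDiff ℝ (⊤:ℕ∞) (fun p : ℝ × ℝ => bb p.1 p.2) := by unfold bb; fun_prop
    have hPfc : ContDiffOn ℝ (⊤:ℕ∞) (Pf f g) (Ioo (-1:ℝ) 1) := by
      unfold Pf
      exact contDiffOn_const.mul
        ((prim_contDiffOn ((contDiff_const.sub Complex.ofRealCLM.contDiff).contDiffOn.mul
          (deriv_contDiffOn hf))).sub (prim_contDiffOn hg))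
    have hQfc : ContDiffOn ℝ (⊤:ℕ∞) (Qf f g) (Ioo (-1:ℝ) 1) := by
      unfold Qf
      exact contDiffOn_const.mul
        ((prim_contDiffOn ((contDiff_const.add Complex.ofRealCLM.contDiff).contDiffOn.mul
          (deriv_contDiffOn hf))).add (prim_contDiffOn hg))
    have hUc : ContDiffOn ℝ (⊤:ℕ∞)
        (fun p : ℝ × ℝ => f 0 + Pf f g (aa p.1 p.2) + Qf f g (bb p.1 p.2)) VV := by
      refine ContDiffOn.add (ContDiffOn.add contDiffOn_const ?_) ?_
      · exact hPfc.comp haa.contDiffOn fun p hp => hp.1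
      · exact hQfc.comp hbb.contDiffOn fun p hp => hp.2
    exact (hUc.mono hsub).congr fun p hp => ufg_eq hg.continuousOn (hsub hp)
  · -- initial value
    intro y hy
    have h0 : (0:ℝ) ∈ Ioo (-1:ℝ) 1 := by norm_num
    have hI : uIcc (0:ℝ) y ⊆ Ioo (-1:ℝ) 1 := Set.ordConnected_Ioo.uIcc_subset h0 hy
    rw [ufg_eq hg.continuousOn (mem_VV le_rfl hy)]
    have ea : aa 0 y = y := by simp [aa]
    have eb : bb 0 y = y := by simp [bb]
    rw [ea, eb]
    have hadd : (∫ x in (0:ℝ)..y, (1-(x:ℂ)) * deriv f x)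
        + (∫ x in (0:ℝ)..y, (1+(x:ℂ)) * deriv f x) = 2 * (f y - f 0) := by
      rw [← intervalIntegral.integral_add (intInt (h1c hf) h0 hy) (intInt (h2c hf) h0 hy)]
      rw [intervalIntegral.integral_congr (g := fun x : ℝ => (2:ℂ) * deriv f x)
        (fun x _ => by ring)]
      rw [intervalIntegral.integral_const_mul]
      rw [intervalIntegral.integral_deriv_eq_sub
        (fun x hx => ((hf.differentiableOn (by simp)).differentiableAt
          (isOpen_Ioo.mem_nhds (hI hx))))
        (intInt (deriv_contDiffOn hf).continuousOn h0 hy)]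
    unfold Pf Qf prim
    linear_combination hadd / 2
  · -- initial time derivative
    intro y hy
    have h := ufg_hasDerivAt_s hf hg (mem_VV le_rfl hy)
    have hd := (h.hasDerivWithinAt).derivWithin (uniqueDiffOn_Ici (0:ℝ) 0 Set.self_mem_Ici)
    rw [hd]
    have ea : aa 0 y = y := by simp [aa]
    have eb : bb 0 y = y := by simp [bb]
    rw [ea, eb]
    simp only [neg_zero, Real.exp_zero, Complex.ofReal_one]
    unfold P1 Q1
    ring
  · -- the PDE
    intro s hs y hy
    have hV : (s, y) ∈ VV := mem_VV (le_of_lt hs) hy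
    have hevS : ∀ᶠ s' in nhds s, (s', y) ∈ VV :=
      (continuous_id.prodMk continuous_const).continuousAt.preimage_mem_nhds
        (VV_open.mem_nhds hV)
    have hevY : ∀ᶠ y' in nhds y, (s, y') ∈ VV :=
      (continuous_const.prodMk continuous_id).continuousAt.preimage_mem_nhds
        (VV_open.mem_nhds hV)
    have h1 : dS (dS (ufg f g)) s y
        = (Real.exp (-s) : ℂ)^2 * ((1 + (y:ℂ))^2 * P2 f g (aa s y)
            + (1 - (y:ℂ))^2 * Q2 f g (bb s y))
          + (Real.exp (-s) : ℂ) * ((1 + (y:ℂ)) * P1 f g (aa s y)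
            - (1 - (y:ℂ)) * Q1 f g (bb s y)) := by
      have hc : (fun s' => dS (ufg f g) s' y) =ᶠ[nhds s]
          (fun s' => (Real.exp (-s') : ℂ) * ((1 - (y:ℂ)) * Q1 f g (bb s' y)
            - (1 + (y:ℂ)) * P1 f g (aa s' y))) := by
        filter_upwards [hevS] with s' h using dS_eq hf hg h
      show deriv (fun s' => dS (ufg f g) s' y) s = _
      rw [hc.deriv_eq]
      exact (DSf_hasDerivAt_s hf hg hV).deriv
    have h2 : dS (dY (ufg f g)) s y
        = (Real.exp (-s) : ℂ)^2 * ((1 - (y:ℂ)) * Q2 f g (bb s y)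
            - (1 + (y:ℂ)) * P2 f g (aa s y))
          - (Real.exp (-s) : ℂ) * (P1 f g (aa s y) + Q1 f g (bb s y)) := by
      have hc : (fun s' => dY (ufg f g) s' y) =ᶠ[nhds s]
          (fun s' => (Real.exp (-s') : ℂ) * (P1 f g (aa s' y) + Q1 f g (bb s' y))) := by
        filter_upwards [hevS] with s' h using dY_eq hf hg h
      show deriv (fun s' => dY (ufg f g) s' y) s = _
      rw [hc.deriv_eq]
      exact (DYf_hasDerivAt_s hf hg hV).deriv
    have h3 : dY (dY (ufg f g)) s y
        = (Real.exp (-s) : ℂ)^2 * (P2 f g (aa s y) + Q2 f g (bb s y)) := by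
      have hc : (fun y' => dY (ufg f g) s y') =ᶠ[nhds y]
          (fun y' => (Real.exp (-s) : ℂ) * (P1 f g (aa s y') + Q1 f g (bb s y'))) := by
        filter_upwards [hevY] with y' h using dY_eq hf hg h
      show deriv (fun y' => dY (ufg f g) s y') y = _
      rw [hc.deriv_eq]
      exact (DYf_hasDerivAt_y hf hg hV).deriv
    have h4 := dS_eq hf hg hV
    have h5 := dY_eq hf hg hV
    unfold waveOp
    rw [h1, h2, h3, h4, h5]
    ring
end

section
/- There exists a constant C > 0 such that for all f,g ∈ C^∞((−1,1)) with ‖(f,g)‖_H < ∞ and all s ≥ 0 one has ‖(u_{f,g}(s,·), ∂_s u_{f,g}(s,·))‖_H ≤ C ‖(f,g)‖_H. -/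
open MeasureTheory Set ENNReal

/-- The squared energy norm `‖(f,g)‖_H² = ∫ (1-y²)|f'|² + ∫ |g|²` as an extended real. -/
noncomputable def energySq (f g : ℝ → ℂ) : ℝ≥0∞ :=
  (∫⁻ y in Ioo (-1:ℝ) 1, ENNReal.ofReal ((1 - y^2) * ‖deriv f y‖^2)) +
    ∫⁻ y in Ioo (-1:ℝ) 1, ENNReal.ofReal (‖g y‖^2)

/-! ### Auxiliary lemmas -/

/-- Change of variables for an affine map in a lower Lebesgue integral over `ℝ`. -/
lemma lintegral_affine {c d : ℝ} (hc : 0 < c) {G : ℝ → ℝ≥0∞} (hG : AEMeasurable G) :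
    ∫⁻ y, G (c * y + d) = ENNReal.ofReal c⁻¹ * ∫⁻ x, G x := by
  have hφ : (fun y : ℝ => c * y + d) = ((d + ·) ∘ (c * ·)) := by
    funext y; simp [Function.comp, add_comm]
  have hmap : Measure.map (fun y : ℝ => c * y + d) volume
      = ENNReal.ofReal c⁻¹ • volume := by
    rw [hφ, ← Measure.map_map (by fun_prop) (by fun_prop),
      Real.map_volume_mul_left hc.ne', Measure.map_smul,
      map_add_left_eq_self volume d, abs_of_pos (inv_pos.2 hc)]
  have h1 : ∫⁻ y, G (c * y + d) = ∫⁻ x, G x ∂(Measure.map (fun y : ℝ => c * y + d) volume) := by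
    rw [lintegral_map' (by rw [hmap]; exact hG.smul_measure _) (by fun_prop)]
  rw [h1, hmap, lintegral_smul_measure, smul_eq_mul]

/-- Change of variables for an affine map in a set lower Lebesgue integral. -/
lemma setLIntegral_affine {e : ℝ} (he : 0 < e) (d : ℝ) {H : ℝ → ℝ≥0∞}
    (hH : AEMeasurable H (volume.restrict (Ioo (d - e) (d + e)))) :
    ∫⁻ y in Ioo (-1:ℝ) 1, H (e * y + d) = ENNReal.ofReal e⁻¹ * ∫⁻ x in Ioo (d - e) (d + e), H x := by
  have key : ∀ y : ℝ, (Ioo (-1:ℝ) 1).indicator (fun y => H (e * y + d)) y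
      = ((Ioo (d - e) (d + e)).indicator H) (e * y + d) := by
    intro y
    have hmem : y ∈ Ioo (-1:ℝ) 1 ↔ e * y + d ∈ Ioo (d - e) (d + e) := by
      simp only [mem_Ioo]
      constructor
      · rintro ⟨h1, h2⟩; constructor <;> nlinarith
      · rintro ⟨h1, h2⟩; constructor <;> nlinarith
    by_cases hy : y ∈ Ioo (-1:ℝ) 1
    · rw [indicator_of_mem hy, indicator_of_mem (hmem.mp hy)]
    · rw [indicator_of_notMem hy, indicator_of_notMem (fun h => hy (hmem.mpr h))]
  rw [← lintegral_indicator measurableSet_Ioo, ← lintegral_indicator measurableSet_Ioo]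
  calc ∫⁻ y, (Ioo (-1:ℝ) 1).indicator (fun y => H (e * y + d)) y
      = ∫⁻ y, ((Ioo (d - e) (d + e)).indicator H) (e * y + d) := by
        exact lintegral_congr key
    _ = ENNReal.ofReal e⁻¹ * ∫⁻ x, ((Ioo (d - e) (d + e)).indicator H) x :=
        lintegral_affine he ((aemeasurable_indicator_iff measurableSet_Ioo).2 hH)

/-- FTC helper: derivative of `t ↦ ∫ x in φ t..0, h x` for `h` continuous on `Ioo (-1) 1`. -/
lemma hasDerivAt_intInt_left {h : ℝ → ℂ} (hcont : ContinuousOn h (Ioo (-1:ℝ) 1))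
    {φ : ℝ → ℝ} {t φ' : ℝ} (hφ : HasDerivAt φ φ' t) (hmem : φ t ∈ Ioo (-1:ℝ) 1) :
    HasDerivAt (fun t => ∫ x in (φ t)..(0:ℝ), h x) (φ' • (-h (φ t))) t := by
  have hInt : IntervalIntegrable h volume (φ t) 0 :=
    (hcont.mono (Set.ordConnected_Ioo.uIcc_subset hmem (by norm_num))).intervalIntegrable
  have hF : HasDerivAt (fun c : ℝ => ∫ x in c..(0:ℝ), h x) (-h (φ t)) (φ t) :=
    intervalIntegral.integral_hasDerivAt_left hInt
      (hcont.stronglyMeasurableAtFilter isOpen_Ioo _ hmem)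
      (hcont.continuousAt (isOpen_Ioo.mem_nhds hmem))
  exact hF.scomp t hφ

/-- FTC helper: derivative of `t ↦ ∫ x in 0..φ t, h x` for `h` continuous on `Ioo (-1) 1`. -/
lemma hasDerivAt_intInt_right {h : ℝ → ℂ} (hcont : ContinuousOn h (Ioo (-1:ℝ) 1))
    {φ : ℝ → ℝ} {t φ' : ℝ} (hφ : HasDerivAt φ φ' t) (hmem : φ t ∈ Ioo (-1:ℝ) 1) :
    HasDerivAt (fun t => ∫ x in (0:ℝ)..(φ t), h x) (φ' • (h (φ t))) t := by
  have hInt : IntervalIntegrable h volume 0 (φ t) :=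
    (hcont.mono (Set.ordConnected_Ioo.uIcc_subset (by norm_num) hmem)).intervalIntegrable
  have hF : HasDerivAt (fun c : ℝ => ∫ x in (0:ℝ)..c, h x) (h (φ t)) (φ t) :=
    intervalIntegral.integral_hasDerivAt_right hInt
      (hcont.stronglyMeasurableAtFilter isOpen_Ioo _ hmem)
      (hcont.continuousAt (isOpen_Ioo.mem_nhds hmem))
  exact hF.scomp t hφ

set_option maxHeartbeats 1000000 in
/-- Quadratic pointwise bound used for the spatial derivative term. -/
lemma pointwise1 (e y p q r t : ℝ) (he : 0 < e) (he1 : e ≤ 1) (hy1 : -1 < y) (hy2 : y < 1)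
    (hp : 0 ≤ p) (hq : 0 ≤ q) (hr : 0 ≤ r) (ht : 0 ≤ t) :
    (1 - y^2) * ((e/2) * ((1 - (e*y+(e-1)))*p + (1 + (e*y+(1-e)))*q + (r + t)))^2 ≤
      4*e*((1-(e*y+(e-1))^2)*p^2) + (4*e*((1-(e*y+(1-e))^2)*q^2) + (4*e*r^2 + 4*e*t^2)) := by
  set x1 := (1 - (e*y+(e-1)))*p with hx1def
  set x2 := (1 + (e*y+(1-e)))*q with hx2def
  have ha1 : 0 ≤ 1 - (e*y+(e-1)) := by nlinarith
  have hb1 : 0 ≤ 1 + (e*y+(1-e)) := by nlinarith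
  have hx1 : 0 ≤ x1 := mul_nonneg ha1 hp
  have hx2 : 0 ≤ x2 := mul_nonneg hb1 hq
  have hyy : 0 ≤ 1 - y^2 := by nlinarith
  have hA1 : (0:ℝ) ≤ 1 + (e*y+(e-1)) := by nlinarith
  have hB1 : (0:ℝ) ≤ 1 - (e*y+(1-e)) := by nlinarith
  have hS : (x1 + x2 + (r + t))^2 ≤ 4*(x1^2 + x2^2 + r^2 + t^2) := by
    nlinarith [sq_nonneg (x1 - x2), sq_nonneg (x1 - r), sq_nonneg (x1 - t),
      sq_nonneg (x2 - r), sq_nonneg (x2 - t), sq_nonneg (r - t)]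
  have k1 : (1 - y^2) * e^2 * x1^2 ≤ 4*e*((1-(e*y+(e-1))^2)*p^2) := by
    have e1 : (1 - y^2) * e^2 * x1^2
        = (e*(1-y)*(1 - (e*y+(e-1)))) * ((1-(e*y+(e-1))^2)*p^2) := by
      rw [hx1def]; ring
    have e2 : e*(1-y)*(1 - (e*y+(e-1))) ≤ 4*e := by
      nlinarith [mul_nonneg he.le hA1,
        mul_nonneg he.le (mul_nonneg (show (0:ℝ) ≤ 1+y by linarith) ha1)]
    have e3 : 0 ≤ (1-(e*y+(e-1))^2)*p^2 :=
      mul_nonneg (by nlinarith [mul_nonneg ha1 hA1]) (sq_nonneg p)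
    rw [e1]; exact mul_le_mul_of_nonneg_right e2 e3
  have k2 : (1 - y^2) * e^2 * x2^2 ≤ 4*e*((1-(e*y+(1-e))^2)*q^2) := by
    have e1 : (1 - y^2) * e^2 * x2^2
        = (e*(1+y)*(1 + (e*y+(1-e)))) * ((1-(e*y+(1-e))^2)*q^2) := by
      rw [hx2def]; ring
    have e2 : e*(1+y)*(1 + (e*y+(1-e))) ≤ 4*e := by
      nlinarith [mul_nonneg he.le hB1,
        mul_nonneg he.le (mul_nonneg (show (0:ℝ) ≤ 1-y by linarith) hb1)]
    have e3 : 0 ≤ (1-(e*y+(1-e))^2)*q^2 :=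
      mul_nonneg (by nlinarith [mul_nonneg hb1 hB1]) (sq_nonneg q)
    rw [e1]; exact mul_le_mul_of_nonneg_right e2 e3
  have hkey : (1 - y^2) * e^2 ≤ 4*e := by
    nlinarith [mul_nonneg (mul_nonneg he.le he.le) (sq_nonneg y),
      mul_nonneg (show (0:ℝ) ≤ 1 - e by linarith) he.le]
  have k3 : (1 - y^2) * e^2 * r^2 ≤ 4*e*r^2 := by
    calc (1 - y^2) * e^2 * r^2 = ((1 - y^2) * e^2) * r^2 := by ring
      _ ≤ (4*e) * r^2 := mul_le_mul_of_nonneg_right hkey (sq_nonneg r)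
      _ = 4*e*r^2 := by ring
  have k4 : (1 - y^2) * e^2 * t^2 ≤ 4*e*t^2 := by
    calc (1 - y^2) * e^2 * t^2 = ((1 - y^2) * e^2) * t^2 := by ring
      _ ≤ (4*e) * t^2 := mul_le_mul_of_nonneg_right hkey (sq_nonneg t)
      _ = 4*e*t^2 := by ring
  calc (1 - y^2) * ((e/2) * (x1 + x2 + (r + t)))^2
      = (1 - y^2) * (e/2)^2 * (x1 + x2 + (r + t))^2 := by ring
    _ ≤ (1 - y^2) * (e/2)^2 * (4*(x1^2 + x2^2 + r^2 + t^2)) := by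
        exact mul_le_mul_of_nonneg_left hS (by positivity)
    _ = (1 - y^2)*e^2*x1^2 + ((1 - y^2)*e^2*x2^2 + ((1 - y^2)*e^2*r^2 + (1 - y^2)*e^2*t^2)) := by
        ring
    _ ≤ _ := add_le_add k1 (add_le_add k2 (add_le_add k3 k4))

set_option maxHeartbeats 1000000 in
/-- Quadratic pointwise bound used for the time derivative term. -/
lemma pointwise2 (e y p q r t : ℝ) (he : 0 < e) (he1 : e ≤ 1) (hy1 : -1 < y) (hy2 : y < 1)
    (hp : 0 ≤ p) (hq : 0 ≤ q) (hr : 0 ≤ r) (ht : 0 ≤ t) :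
    ((e/2) * ((1+y)*((1 - (e*y+(e-1)))*p) + (1-y)*((1 + (e*y+(1-e)))*q) + ((1+y)*r + (1-y)*t)))^2 ≤
      4*e*((1-(e*y+(e-1))^2)*p^2) + (4*e*((1-(e*y+(1-e))^2)*q^2) + (4*e*r^2 + 4*e*t^2)) := by
  set x1 := (1+y)*((1 - (e*y+(e-1)))*p) with hx1def
  set x2 := (1-y)*((1 + (e*y+(1-e)))*q) with hx2def
  set x3 := (1+y)*r with hx3def
  set x4 := (1-y)*t with hx4def
  have ha1 : 0 ≤ 1 - (e*y+(e-1)) := by nlinarith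
  have hb1 : 0 ≤ 1 + (e*y+(1-e)) := by nlinarith
  have hx1 : 0 ≤ x1 := mul_nonneg (by linarith) (mul_nonneg ha1 hp)
  have hx2 : 0 ≤ x2 := mul_nonneg (by linarith) (mul_nonneg hb1 hq)
  have hx3 : 0 ≤ x3 := mul_nonneg (by linarith) hr
  have hx4 : 0 ≤ x4 := mul_nonneg (by linarith) ht
  have hA1 : (0:ℝ) ≤ 1 + (e*y+(e-1)) := by nlinarith
  have hB1 : (0:ℝ) ≤ 1 - (e*y+(1-e)) := by nlinarith
  have hS : (x1 + x2 + (x3 + x4))^2 ≤ 4*(x1^2 + x2^2 + x3^2 + x4^2) := by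
    nlinarith [sq_nonneg (x1 - x2), sq_nonneg (x1 - x3), sq_nonneg (x1 - x4),
      sq_nonneg (x2 - x3), sq_nonneg (x2 - x4), sq_nonneg (x3 - x4)]
  have k1 : e^2 * x1^2 ≤ 4*e*((1-(e*y+(e-1))^2)*p^2) := by
    have e1 : e^2 * x1^2 = (1-(e*y+(e-1))^2) * ((1-(e*y+(e-1))^2)*p^2) := by
      rw [hx1def]; ring
    have e2 : 1-(e*y+(e-1))^2 ≤ 4*e := by
      nlinarith [mul_nonneg he.le (show (0:ℝ) ≤ 1-y by linarith),
        mul_nonneg (mul_nonneg he.le (show (0:ℝ) ≤ 1+y by linarith)) hA1]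
    have e3 : 0 ≤ (1-(e*y+(e-1))^2)*p^2 :=
      mul_nonneg (by nlinarith [mul_nonneg ha1 hA1]) (sq_nonneg p)
    rw [e1]; exact mul_le_mul_of_nonneg_right e2 e3
  have k2 : e^2 * x2^2 ≤ 4*e*((1-(e*y+(1-e))^2)*q^2) := by
    have e1 : e^2 * x2^2 = (1-(e*y+(1-e))^2) * ((1-(e*y+(1-e))^2)*q^2) := by
      rw [hx2def]; ring
    have e2 : 1-(e*y+(1-e))^2 ≤ 4*e := by
      nlinarith [mul_nonneg he.le (show (0:ℝ) ≤ 1+y by linarith),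
        mul_nonneg (mul_nonneg he.le (show (0:ℝ) ≤ 1-y by linarith)) hB1]
    have e3 : 0 ≤ (1-(e*y+(1-e))^2)*q^2 :=
      mul_nonneg (by nlinarith [mul_nonneg hb1 hB1]) (sq_nonneg q)
    rw [e1]; exact mul_le_mul_of_nonneg_right e2 e3
  have hk3 : e^2 * (1+y)^2 ≤ 4*e := by
    nlinarith [mul_nonneg (mul_nonneg (show (0:ℝ) ≤ 1-e by linarith) he.le) (sq_nonneg (1+y)),
      mul_nonneg he.le (show (0:ℝ) ≤ 4 - (1+y)^2 by nlinarith)]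
  have hk4 : e^2 * (1-y)^2 ≤ 4*e := by
    nlinarith [mul_nonneg (mul_nonneg (show (0:ℝ) ≤ 1-e by linarith) he.le) (sq_nonneg (1-y)),
      mul_nonneg he.le (show (0:ℝ) ≤ 4 - (1-y)^2 by nlinarith)]
  have k3 : e^2 * x3^2 ≤ 4*e*r^2 := by
    calc e^2 * x3^2 = (e^2 * (1+y)^2) * r^2 := by rw [hx3def]; ring
      _ ≤ (4*e) * r^2 := mul_le_mul_of_nonneg_right hk3 (sq_nonneg r)
      _ = 4*e*r^2 := by ring
  have k4 : e^2 * x4^2 ≤ 4*e*t^2 := by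
    calc e^2 * x4^2 = (e^2 * (1-y)^2) * t^2 := by rw [hx4def]; ring
      _ ≤ (4*e) * t^2 := mul_le_mul_of_nonneg_right hk4 (sq_nonneg t)
      _ = 4*e*t^2 := by ring
  calc ((e/2) * (x1 + x2 + (x3 + x4)))^2
      = (e/2)^2 * (x1 + x2 + (x3 + x4))^2 := by ring
    _ ≤ (e/2)^2 * (4*(x1^2 + x2^2 + x3^2 + x4^2)) := by
        exact mul_le_mul_of_nonneg_left hS (by positivity)
    _ = e^2*x1^2 + (e^2*x2^2 + (e^2*x3^2 + e^2*x4^2)) := by ring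
    _ ≤ _ := add_le_add k1 (add_le_add k2 (add_le_add k3 k4))

set_option maxHeartbeats 4000000 in
/-- Boundedness of the energy (Lemma `lem:en0`): there is `C > 0` such that for all
smooth data `f,g` on `(-1,1)` with finite energy and all `s ≥ 0`,
`‖(u_{f,g}(s,·), ∂_s u_{f,g}(s,·))‖_H ≤ C ‖(f,g)‖_H`. -/
theorem stmt4 :
    ∃ C : ℝ, 0 < C ∧ ∀ f g : ℝ → ℂ,
      ContDiffOn ℝ (⊤:ℕ∞) f (Ioo (-1:ℝ) 1) →
      ContDiffOn ℝ (⊤:ℕ∞) g (Ioo (-1:ℝ) 1) →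
      energySq f g < ⊤ →
      ∀ s : ℝ, 0 ≤ s →
        (energySq (fun y => ufg f g s y)
            (fun y => derivWithin (fun s' => ufg f g s' y) (Ici (0:ℝ)) s)) ^ (1/2 : ℝ)
          ≤ ENNReal.ofReal C * (energySq f g) ^ (1/2 : ℝ) := by
  refine ⟨4, by norm_num, ?_⟩
  intro f g hf hg _ s hs
  set ee := Real.exp (-s) with heedef
  have he : 0 < ee := Real.exp_pos _
  have he1 : ee ≤ 1 := Real.exp_le_one_iff.mpr (by linarith)
  have hf' : ContinuousOn (deriv f) (Ioo (-1:ℝ) 1) :=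
    hf.continuousOn_deriv_of_isOpen isOpen_Ioo (by exact_mod_cast le_top)
  have hg' : ContinuousOn g (Ioo (-1:ℝ) 1) := hg.continuousOn
  have h1c : ContinuousOn (fun x : ℝ => (1 - (x:ℂ)) * deriv f x) (Ioo (-1:ℝ) 1) :=
    (continuousOn_const.sub Complex.continuous_ofReal.continuousOn).mul hf'
  have h2c : ContinuousOn (fun x : ℝ => (1 + (x:ℂ)) * deriv f x) (Ioo (-1:ℝ) 1) :=
    (continuousOn_const.add Complex.continuous_ofReal.continuousOn).mul hf'
  have hAmem : ∀ y ∈ Ioo (-1:ℝ) 1, (-1 + ee * (1 + y)) ∈ Ioo (-1:ℝ) 1 := by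
    intro y hy; obtain ⟨hy1, hy2⟩ := hy
    constructor <;> nlinarith
  have hBmem : ∀ y ∈ Ioo (-1:ℝ) 1, (1 - ee * (1 - y)) ∈ Ioo (-1:ℝ) 1 := by
    intro y hy; obtain ⟨hy1, hy2⟩ := hy
    constructor <;> nlinarith
  have hzero : (0:ℝ) ∈ Ioo (-1:ℝ) 1 := by constructor <;> norm_num
  -- the split form of ufg
  have hsplit : ∀ σ y : ℝ, (-1 + Real.exp (-σ) * (1 + y)) ∈ Ioo (-1:ℝ) 1 →
      (1 - Real.exp (-σ) * (1 - y)) ∈ Ioo (-1:ℝ) 1 →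
      ufg f g σ y
        = f 0 - (1/2) * (∫ x in (-1 + Real.exp (-σ) * (1 + y))..(0:ℝ), (1 - (x:ℂ)) * deriv f x)
          + (1/2) * (∫ x in (0:ℝ)..(1 - Real.exp (-σ) * (1 - y)), (1 + (x:ℂ)) * deriv f x)
          + (1/2) * ((∫ x in (-1 + Real.exp (-σ) * (1 + y))..(0:ℝ), g x)
              + (∫ x in (0:ℝ)..(1 - Real.exp (-σ) * (1 - y)), g x)) := by
    intro σ y hA hB
    have i1 : IntervalIntegrable g volume (-1 + Real.exp (-σ) * (1 + y)) 0 :=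
      (hg'.mono (Set.ordConnected_Ioo.uIcc_subset hA hzero)).intervalIntegrable
    have i2 : IntervalIntegrable g volume 0 (1 - Real.exp (-σ) * (1 - y)) :=
      (hg'.mono (Set.ordConnected_Ioo.uIcc_subset hzero hB)).intervalIntegrable
    rw [ufg, ← intervalIntegral.integral_add_adjacent_intervals i1 i2]
  -- the two derivative formulas
  set Dy : ℝ → ℂ := fun y => ((ee/2 : ℝ) : ℂ) *
      ((1 - ((ee*y+(ee-1) : ℝ) : ℂ)) * deriv f (ee*y+(ee-1)) +
        ((1 + ((ee*y+(1-ee) : ℝ) : ℂ)) * deriv f (ee*y+(1-ee)) +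
          (g (ee*y+(1-ee)) - g (ee*y+(ee-1))))) with hDydef
  set Ds : ℝ → ℂ := fun y => ((ee/2 : ℝ) : ℂ) *
      (-(((1+y : ℝ) : ℂ) * ((1 - ((ee*y+(ee-1) : ℝ) : ℂ)) * deriv f (ee*y+(ee-1)))) +
        (((1-y : ℝ) : ℂ) * ((1 + ((ee*y+(1-ee) : ℝ) : ℂ)) * deriv f (ee*y+(1-ee))) +
          (((1+y : ℝ) : ℂ) * g (ee*y+(ee-1)) + ((1-y : ℝ) : ℂ) * g (ee*y+(1-ee))))) with hDsdef
  have claimY : ∀ y ∈ Ioo (-1:ℝ) 1, HasDerivAt (fun y' => ufg f g s y') (Dy y) y := by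
    intro y hy
    obtain ⟨hy1, hy2⟩ := hy
    have hAy : HasDerivAt (fun t : ℝ => -1 + ee * (1 + t)) ee y := by
      simpa using (((hasDerivAt_id y).const_add (1:ℝ)).const_mul ee).const_add (-1)
    have hBy : HasDerivAt (fun t : ℝ => 1 - ee * (1 - t)) ee y := by
      simpa using ((((hasDerivAt_id y).const_sub (1:ℝ)).const_mul ee).const_sub 1)
    have hAm : (-1 + ee * (1 + y)) ∈ Ioo (-1:ℝ) 1 := hAmem y ⟨hy1, hy2⟩
    have hBm : (1 - ee * (1 - y)) ∈ Ioo (-1:ℝ) 1 := hBmem y ⟨hy1, hy2⟩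
    have d1 := hasDerivAt_intInt_left h1c hAy hAm
    have d2 := hasDerivAt_intInt_right h2c hBy hBm
    have d3 := hasDerivAt_intInt_left hg' hAy hAm
    have d4 := hasDerivAt_intInt_right hg' hBy hBm
    have dV := (((hasDerivAt_const y (f 0)).sub (HasDerivAt.const_mul (1/2:ℂ) d1)).add
        (HasDerivAt.const_mul (1/2:ℂ) d2)).add (HasDerivAt.const_mul (1/2:ℂ) (d3.add d4))
    have heq : (fun y' => ufg f g s y') =ᶠ[nhds y]
        (fun y' => f 0 - (1/2) * (∫ x in (-1 + ee * (1 + y'))..(0:ℝ), (1 - (x:ℂ)) * deriv f x)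
          + (1/2) * (∫ x in (0:ℝ)..(1 - ee * (1 - y')), (1 + (x:ℂ)) * deriv f x)
          + (1/2) * ((∫ x in (-1 + ee * (1 + y'))..(0:ℝ), g x)
              + (∫ x in (0:ℝ)..(1 - ee * (1 - y')), g x))) := by
      filter_upwards [isOpen_Ioo.mem_nhds (show y ∈ Ioo (-1:ℝ) 1 from ⟨hy1, hy2⟩)] with y' hy'
      exact hsplit s y' (hAmem y' hy') (hBmem y' hy')
    have hD := dV.congr_of_eventuallyEq heq
    have harg1 : -1 + ee * (1 + y) = ee*y+(ee-1) := by ring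
    have harg2 : 1 - ee * (1 - y) = ee*y+(1-ee) := by ring
    convert hD using 1
    case e'_4 => rfl
    simp only [hDydef]
    rw [← harg1, ← harg2]
    simp only [Complex.real_smul]
    push_cast
    ring
  have claimS : ∀ y ∈ Ioo (-1:ℝ) 1,
      derivWithin (fun s' => ufg f g s' y) (Ici (0:ℝ)) s = Ds y := by
    intro y hy
    obtain ⟨hy1, hy2⟩ := hy
    have hxp : HasDerivAt (fun σ : ℝ => Real.exp (-σ)) (-ee) s := by
      have h0 : HasDerivAt (fun σ : ℝ => -σ) (-1) s := (hasDerivAt_id s).neg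
      have := (Real.hasDerivAt_exp (-s)).comp s h0
      simpa [heedef, Function.comp_def, mul_comm] using this
    have hAy : HasDerivAt (fun σ : ℝ => -1 + Real.exp (-σ) * (1 + y)) (-ee * (1+y)) s := by
      simpa using (hxp.mul_const (1 + y)).const_add (-1)
    have hBy : HasDerivAt (fun σ : ℝ => 1 - Real.exp (-σ) * (1 - y)) (ee * (1-y)) s := by
      simpa [neg_mul] using (hxp.mul_const (1 - y)).const_sub 1
    have hAm : (-1 + Real.exp (-s) * (1 + y)) ∈ Ioo (-1:ℝ) 1 := hAmem y ⟨hy1, hy2⟩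
    have hBm : (1 - Real.exp (-s) * (1 - y)) ∈ Ioo (-1:ℝ) 1 := hBmem y ⟨hy1, hy2⟩
    have d1 := hasDerivAt_intInt_left h1c hAy hAm
    have d2 := hasDerivAt_intInt_right h2c hBy hBm
    have d3 := hasDerivAt_intInt_left hg' hAy hAm
    have d4 := hasDerivAt_intInt_right hg' hBy hBm
    have dV := (((hasDerivAt_const s (f 0)).sub (HasDerivAt.const_mul (1/2:ℂ) d1)).add
        (HasDerivAt.const_mul (1/2:ℂ) d2)).add (HasDerivAt.const_mul (1/2:ℂ) (d3.add d4))
    have hcont1 : Continuous fun σ : ℝ => Real.exp (-σ) * (1+y) :=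
      (Real.continuous_exp.comp continuous_neg).mul continuous_const
    have hcont2 : Continuous fun σ : ℝ => Real.exp (-σ) * (1-y) :=
      (Real.continuous_exp.comp continuous_neg).mul continuous_const
    have hopen : IsOpen ({σ : ℝ | Real.exp (-σ) * (1+y) < 2} ∩ {σ : ℝ | Real.exp (-σ) * (1-y) < 2}) :=
      (isOpen_lt hcont1 continuous_const).inter (isOpen_lt hcont2 continuous_const)
    have hmemS : s ∈ ({σ : ℝ | Real.exp (-σ) * (1+y) < 2} ∩ {σ : ℝ | Real.exp (-σ) * (1-y) < 2}) := by
      constructor <;> · show Real.exp (-s) * _ < 2; rw [← heedef]; nlinarith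
    have heq : (fun σ => ufg f g σ y) =ᶠ[nhds s]
        (fun σ => f 0 - (1/2) * (∫ x in (-1 + Real.exp (-σ) * (1 + y))..(0:ℝ), (1 - (x:ℂ)) * deriv f x)
          + (1/2) * (∫ x in (0:ℝ)..(1 - Real.exp (-σ) * (1 - y)), (1 + (x:ℂ)) * deriv f x)
          + (1/2) * ((∫ x in (-1 + Real.exp (-σ) * (1 + y))..(0:ℝ), g x)
              + (∫ x in (0:ℝ)..(1 - Real.exp (-σ) * (1 - y)), g x))) := by
      filter_upwards [hopen.mem_nhds hmemS] with σ hσ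
      obtain ⟨hσ1, hσ2⟩ := hσ
      simp only [Set.mem_setOf_eq] at hσ1 hσ2
      have hε := Real.exp_pos (-σ)
      refine hsplit σ y ⟨by nlinarith [mul_pos hε (show (0:ℝ) < 1+y by linarith)], by linarith⟩
        ⟨by linarith, by nlinarith [mul_pos hε (show (0:ℝ) < 1-y by linarith)]⟩
    have hD := dV.congr_of_eventuallyEq heq
    have hD2 : HasDerivAt (fun σ => ufg f g σ y) (Ds y) s := by
      convert hD using 1
      case e'_4 => rfl
      simp only [hDsdef]
      rw [show ee*y+(ee-1) = -1 + Real.exp (-s) * (1 + y) from by rw [heedef]; ring,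
        show ee*y+(1-ee) = 1 - Real.exp (-s) * (1 - y) from by rw [heedef]; ring]
      simp only [Complex.real_smul, heedef]
      push_cast
      ring
    exact hD2.hasDerivWithinAt.derivWithin (uniqueDiffOn_Ici 0 s hs)
  -- energy components and measurability
  set H1 : ℝ → ℝ≥0∞ := fun x => ENNReal.ofReal ((1 - x^2) * ‖deriv f x‖^2) with hH1def
  set H2 : ℝ → ℝ≥0∞ := fun x => ENNReal.ofReal (‖g x‖^2) with hH2def
  have mH1 : Measurable H1 := by
    apply ENNReal.measurable_ofReal.comp
    exact ((measurable_const.sub (measurable_id'.pow measurable_const)).mul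
      (((measurable_deriv f).norm).pow measurable_const))
  have hsub1 : Ioo ((ee-1) - ee) ((ee-1) + ee) ⊆ Ioo (-1:ℝ) 1 := by
    intro x hx; obtain ⟨hx1, hx2⟩ := hx; exact ⟨by linarith, by linarith⟩
  have hsub2 : Ioo ((1-ee) - ee) ((1-ee) + ee) ⊆ Ioo (-1:ℝ) 1 := by
    intro x hx; obtain ⟨hx1, hx2⟩ := hx; exact ⟨by linarith, by linarith⟩
  have mH2 : ∀ p q : ℝ, Ioo p q ⊆ Ioo (-1:ℝ) 1 →
      AEMeasurable H2 (volume.restrict (Ioo p q)) := by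
    intro p q hpq
    exact (ENNReal.continuous_ofReal.comp_continuousOn
      (((hg'.mono hpq).norm).pow 2)).aemeasurable measurableSet_Ioo
  -- change of variables bounds
  have subst1 : ∫⁻ y in Ioo (-1:ℝ) 1, H1 (ee*y+(ee-1))
      ≤ ENNReal.ofReal ee⁻¹ * ∫⁻ x in Ioo (-1:ℝ) 1, H1 x := by
    rw [setLIntegral_affine he (ee-1) mH1.aemeasurable.restrict]
    exact mul_le_mul_right (lintegral_mono_set hsub1) _
  have subst2 : ∫⁻ y in Ioo (-1:ℝ) 1, H1 (ee*y+(1-ee))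
      ≤ ENNReal.ofReal ee⁻¹ * ∫⁻ x in Ioo (-1:ℝ) 1, H1 x := by
    rw [setLIntegral_affine he (1-ee) mH1.aemeasurable.restrict]
    exact mul_le_mul_right (lintegral_mono_set hsub2) _
  have subst3 : ∫⁻ y in Ioo (-1:ℝ) 1, H2 (ee*y+(ee-1))
      ≤ ENNReal.ofReal ee⁻¹ * ∫⁻ x in Ioo (-1:ℝ) 1, H2 x := by
    rw [setLIntegral_affine he (ee-1) (mH2 _ _ hsub1)]
    exact mul_le_mul_right (lintegral_mono_set hsub1) _
  have subst4 : ∫⁻ y in Ioo (-1:ℝ) 1, H2 (ee*y+(1-ee))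
      ≤ ENNReal.ofReal ee⁻¹ * ∫⁻ x in Ioo (-1:ℝ) 1, H2 x := by
    rw [setLIntegral_affine he (1-ee) (mH2 _ _ hsub2)]
    exact mul_le_mul_right (lintegral_mono_set hsub2) _
  -- the pointwise domination by the sum G
  set G : ℝ → ℝ≥0∞ := fun y => ENNReal.ofReal (4*ee) * H1 (ee*y+(ee-1)) +
      (ENNReal.ofReal (4*ee) * H1 (ee*y+(1-ee)) +
        (ENNReal.ofReal (4*ee) * H2 (ee*y+(ee-1)) + ENNReal.ofReal (4*ee) * H2 (ee*y+(1-ee)))) with hGdef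
  have hmemc : ∀ y ∈ Ioo (-1:ℝ) 1,
      (ee*y+(ee-1)) ∈ Ioo (-1:ℝ) 1 ∧ (ee*y+(1-ee)) ∈ Ioo (-1:ℝ) 1 := by
    intro y hy; obtain ⟨hy1, hy2⟩ := hy
    exact ⟨⟨by nlinarith, by nlinarith⟩, ⟨by nlinarith, by nlinarith⟩⟩
  have hsplitofReal : ∀ y ∈ Ioo (-1:ℝ) 1, ∀ X : ℝ,
      (X ≤ 4*ee*((1-(ee*y+(ee-1))^2)*‖deriv f (ee*y+(ee-1))‖^2) +
        (4*ee*((1-(ee*y+(1-ee))^2)*‖deriv f (ee*y+(1-ee))‖^2) +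
          (4*ee*‖g (ee*y+(ee-1))‖^2 + 4*ee*‖g (ee*y+(1-ee))‖^2))) →
      ENNReal.ofReal X ≤ G y := by
    intro y hy X hX
    obtain ⟨⟨hc1, hc2⟩, ⟨hc3, hc4⟩⟩ := hmemc y hy
    have n1 : (0:ℝ) ≤ 4*ee*((1-(ee*y+(ee-1))^2)*‖deriv f (ee*y+(ee-1))‖^2) := by
      have : (0:ℝ) ≤ 1-(ee*y+(ee-1))^2 := by nlinarith
      positivity
    have n2 : (0:ℝ) ≤ 4*ee*((1-(ee*y+(1-ee))^2)*‖deriv f (ee*y+(1-ee))‖^2) := by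
      have : (0:ℝ) ≤ 1-(ee*y+(1-ee))^2 := by nlinarith
      positivity
    have n3 : (0:ℝ) ≤ 4*ee*‖g (ee*y+(ee-1))‖^2 := by positivity
    have n4 : (0:ℝ) ≤ 4*ee*‖g (ee*y+(1-ee))‖^2 := by positivity
    calc ENNReal.ofReal X ≤ ENNReal.ofReal (4*ee*((1-(ee*y+(ee-1))^2)*‖deriv f (ee*y+(ee-1))‖^2) +
        (4*ee*((1-(ee*y+(1-ee))^2)*‖deriv f (ee*y+(1-ee))‖^2) +
          (4*ee*‖g (ee*y+(ee-1))‖^2 + 4*ee*‖g (ee*y+(1-ee))‖^2))) := ENNReal.ofReal_le_ofReal hX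
      _ = G y := by
        rw [ENNReal.ofReal_add n1 (by positivity), ENNReal.ofReal_add n2 (by positivity),
          ENNReal.ofReal_add n3 n4, hGdef, hH1def, hH2def]
        simp only []
        rw [ENNReal.ofReal_mul (by positivity : (0:ℝ) ≤ 4*ee),
          ENNReal.ofReal_mul (by positivity : (0:ℝ) ≤ 4*ee),
          ENNReal.ofReal_mul (by positivity : (0:ℝ) ≤ 4*ee),
          ENNReal.ofReal_mul (by positivity : (0:ℝ) ≤ 4*ee)]
  -- pointwise bound for the y-derivative
  have pb1 : ∀ y ∈ Ioo (-1:ℝ) 1,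
      ENNReal.ofReal ((1 - y^2) * ‖Dy y‖^2) ≤ G y := by
    intro y hy
    obtain ⟨hy1, hy2⟩ := hy
    obtain ⟨⟨hc1, hc2⟩, ⟨hc3, hc4⟩⟩ := hmemc y ⟨hy1, hy2⟩
    set p := ‖deriv f (ee*y+(ee-1))‖ with hp
    set q := ‖deriv f (ee*y+(1-ee))‖ with hq
    set r := ‖g (ee*y+(ee-1))‖ with hr
    set t := ‖g (ee*y+(1-ee))‖ with ht
    have hnorm : ‖Dy y‖ ≤ (ee/2) * ((1 - (ee*y+(ee-1)))*p + (1 + (ee*y+(1-ee)))*q + (r + t)) := by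
      rw [hDydef]
      simp only []
      rw [norm_mul, Complex.norm_real, Real.norm_eq_abs, abs_of_nonneg (by positivity : (0:ℝ) ≤ ee/2)]
      have b1 : ‖(1 - ((ee*y+(ee-1) : ℝ) : ℂ)) * deriv f (ee*y+(ee-1))‖ ≤ (1 - (ee*y+(ee-1)))*p := by
        rw [norm_mul, show (1 : ℂ) - ((ee*y+(ee-1) : ℝ) : ℂ) = ((1 - (ee*y+(ee-1)) : ℝ) : ℂ) from by push_cast; ring,
          Complex.norm_real, Real.norm_eq_abs, abs_of_nonneg (by linarith)]
      have b2 : ‖(1 + ((ee*y+(1-ee) : ℝ) : ℂ)) * deriv f (ee*y+(1-ee))‖ ≤ (1 + (ee*y+(1-ee)))*q := by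
        rw [norm_mul, show (1 : ℂ) + ((ee*y+(1-ee) : ℝ) : ℂ) = ((1 + (ee*y+(1-ee)) : ℝ) : ℂ) from by push_cast; ring,
          Complex.norm_real, Real.norm_eq_abs, abs_of_nonneg (by linarith)]
      have b3 : ‖g (ee*y+(1-ee)) - g (ee*y+(ee-1))‖ ≤ r + t := by
        have := norm_sub_le (g (ee*y+(1-ee))) (g (ee*y+(ee-1)))
        rw [← hr, ← ht] at this; linarith
      have chain := (norm_add_le ((1 - ((ee*y+(ee-1) : ℝ) : ℂ)) * deriv f (ee*y+(ee-1)))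
        _).trans (add_le_add b1 ((norm_add_le _ _).trans (add_le_add b2 b3)))
      have := mul_le_mul_of_nonneg_left chain (by positivity : (0:ℝ) ≤ ee/2)
      linarith [this]
    have hN : (0:ℝ) ≤ (ee/2) * ((1 - (ee*y+(ee-1)))*p + (1 + (ee*y+(1-ee)))*q + (r + t)) := by
      have : (0:ℝ) ≤ (1 - (ee*y+(ee-1)))*p := mul_nonneg (by linarith) (norm_nonneg _)
      have : (0:ℝ) ≤ (1 + (ee*y+(1-ee)))*q := mul_nonneg (by linarith) (norm_nonneg _)
      positivity
    have hsq : ‖Dy y‖^2 ≤ ((ee/2) * ((1 - (ee*y+(ee-1)))*p + (1 + (ee*y+(1-ee)))*q + (r + t)))^2 :=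
      pow_le_pow_left₀ (norm_nonneg _) hnorm 2
    have h3 : (1 - y^2) * ‖Dy y‖^2
        ≤ (1 - y^2) * ((ee/2) * ((1 - (ee*y+(ee-1)))*p + (1 + (ee*y+(1-ee)))*q + (r + t)))^2 :=
      mul_le_mul_of_nonneg_left hsq (by nlinarith)
    have h4 := pointwise1 ee y p q r t he he1 hy1 hy2 (norm_nonneg _) (norm_nonneg _)
      (norm_nonneg _) (norm_nonneg _)
    exact hsplitofReal y ⟨hy1, hy2⟩ _ (by linarith)
  -- pointwise bound for the s-derivative
  have pb2 : ∀ y ∈ Ioo (-1:ℝ) 1,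
      ENNReal.ofReal (‖Ds y‖^2) ≤ G y := by
    intro y hy
    obtain ⟨hy1, hy2⟩ := hy
    obtain ⟨⟨hc1, hc2⟩, ⟨hc3, hc4⟩⟩ := hmemc y ⟨hy1, hy2⟩
    set p := ‖deriv f (ee*y+(ee-1))‖ with hp
    set q := ‖deriv f (ee*y+(1-ee))‖ with hq
    set r := ‖g (ee*y+(ee-1))‖ with hr
    set t := ‖g (ee*y+(1-ee))‖ with ht
    have hnorm : ‖Ds y‖ ≤ (ee/2) * ((1+y)*((1 - (ee*y+(ee-1)))*p) + (1-y)*((1 + (ee*y+(1-ee)))*q)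
        + ((1+y)*r + (1-y)*t)) := by
      rw [hDsdef]
      simp only []
      rw [norm_mul, Complex.norm_real, Real.norm_eq_abs, abs_of_nonneg (by positivity : (0:ℝ) ≤ ee/2)]
      have b1 : ‖-(((1+y : ℝ) : ℂ) * ((1 - ((ee*y+(ee-1) : ℝ) : ℂ)) * deriv f (ee*y+(ee-1))))‖
          ≤ (1+y)*((1 - (ee*y+(ee-1)))*p) := by
        rw [norm_neg, norm_mul, norm_mul, Complex.norm_real, Real.norm_eq_abs,
          abs_of_nonneg (by linarith : (0:ℝ) ≤ 1+y),
          show (1 : ℂ) - ((ee*y+(ee-1) : ℝ) : ℂ) = ((1 - (ee*y+(ee-1)) : ℝ) : ℂ) from by push_cast; ring,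
          Complex.norm_real, Real.norm_eq_abs, abs_of_nonneg (by linarith)]
      have b2 : ‖((1-y : ℝ) : ℂ) * ((1 + ((ee*y+(1-ee) : ℝ) : ℂ)) * deriv f (ee*y+(1-ee)))‖
          ≤ (1-y)*((1 + (ee*y+(1-ee)))*q) := by
        rw [norm_mul, norm_mul, Complex.norm_real, Real.norm_eq_abs,
          abs_of_nonneg (by linarith : (0:ℝ) ≤ 1-y),
          show (1 : ℂ) + ((ee*y+(1-ee) : ℝ) : ℂ) = ((1 + (ee*y+(1-ee)) : ℝ) : ℂ) from by push_cast; ring,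
          Complex.norm_real, Real.norm_eq_abs, abs_of_nonneg (by linarith)]
      have b3 : ‖((1+y : ℝ) : ℂ) * g (ee*y+(ee-1)) + ((1-y : ℝ) : ℂ) * g (ee*y+(1-ee))‖
          ≤ (1+y)*r + (1-y)*t := by
        refine (norm_add_le _ _).trans ?_
        rw [norm_mul, norm_mul, Complex.norm_real, Complex.norm_real, Real.norm_eq_abs,
          Real.norm_eq_abs, abs_of_nonneg (by linarith : (0:ℝ) ≤ 1+y),
          abs_of_nonneg (by linarith : (0:ℝ) ≤ 1-y)]
      have chain := (norm_add_le (-(((1+y : ℝ) : ℂ) * ((1 - ((ee*y+(ee-1) : ℝ) : ℂ)) * deriv f (ee*y+(ee-1)))))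
        _).trans (add_le_add b1 ((norm_add_le _ _).trans (add_le_add b2 b3)))
      have := mul_le_mul_of_nonneg_left chain (by positivity : (0:ℝ) ≤ ee/2)
      linarith [this]
    have hsq : ‖Ds y‖^2 ≤ ((ee/2) * ((1+y)*((1 - (ee*y+(ee-1)))*p) + (1-y)*((1 + (ee*y+(1-ee)))*q)
        + ((1+y)*r + (1-y)*t)))^2 :=
      pow_le_pow_left₀ (norm_nonneg _) hnorm 2
    have h4 := pointwise2 ee y p q r t he he1 hy1 hy2 (norm_nonneg _) (norm_nonneg _)
      (norm_nonneg _) (norm_nonneg _)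
    exact hsplitofReal y ⟨hy1, hy2⟩ _ (by linarith)
  -- measurability of the pieces of G
  have mG1 : AEMeasurable (fun y => ENNReal.ofReal (4*ee) * H1 (ee*y+(ee-1)))
      (volume.restrict (Ioo (-1:ℝ) 1)) :=
    ((mH1.comp (by fun_prop : Measurable fun y : ℝ => ee*y+(ee-1))).aemeasurable).const_mul _
  have mG2 : AEMeasurable (fun y => ENNReal.ofReal (4*ee) * H1 (ee*y+(1-ee)))
      (volume.restrict (Ioo (-1:ℝ) 1)) :=
    ((mH1.comp (by fun_prop : Measurable fun y : ℝ => ee*y+(1-ee))).aemeasurable).const_mul _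
  have mapsTo1 : MapsTo (fun y : ℝ => ee*y+(ee-1)) (Ioo (-1:ℝ) 1) (Ioo (-1:ℝ) 1) :=
    fun y hy => (hmemc y hy).1
  have mapsTo2 : MapsTo (fun y : ℝ => ee*y+(1-ee)) (Ioo (-1:ℝ) 1) (Ioo (-1:ℝ) 1) :=
    fun y hy => (hmemc y hy).2
  have mG3 : AEMeasurable (fun y => ENNReal.ofReal (4*ee) * H2 (ee*y+(ee-1)))
      (volume.restrict (Ioo (-1:ℝ) 1)) := by
    have hco : ContinuousOn (fun y : ℝ => H2 (ee*y+(ee-1))) (Ioo (-1:ℝ) 1) := by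
      rw [hH2def]
      exact ENNReal.continuous_ofReal.comp_continuousOn
        (((hg'.comp (by fun_prop : Continuous fun y : ℝ => ee*y+(ee-1)).continuousOn mapsTo1).norm).pow 2)
    exact (hco.aemeasurable measurableSet_Ioo).const_mul _
  have mG4 : AEMeasurable (fun y => ENNReal.ofReal (4*ee) * H2 (ee*y+(1-ee)))
      (volume.restrict (Ioo (-1:ℝ) 1)) := by
    have hco : ContinuousOn (fun y : ℝ => H2 (ee*y+(1-ee))) (Ioo (-1:ℝ) 1) := by
      rw [hH2def]
      exact ENNReal.continuous_ofReal.comp_continuousOn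
        (((hg'.comp (by fun_prop : Continuous fun y : ℝ => ee*y+(1-ee)).continuousOn mapsTo2).norm).pow 2)
    exact (hco.aemeasurable measurableSet_Ioo).const_mul _
  -- the integral of G is controlled
  have hGbound : ∫⁻ y in Ioo (-1:ℝ) 1, G y ≤ ENNReal.ofReal 8 * energySq f g := by
    have hconst : ENNReal.ofReal (4*ee) * ENNReal.ofReal ee⁻¹ = ENNReal.ofReal 4 := by
      rw [← ENNReal.ofReal_mul (by positivity)]
      congr 1
      field_simp
    have key : ∀ (F : ℝ → ℝ≥0∞), (∫⁻ y in Ioo (-1:ℝ) 1, F y ≤ ENNReal.ofReal ee⁻¹ * ∫⁻ x in Ioo (-1:ℝ) 1, F x) →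
        True := fun _ _ => trivial
    have t1 : ∫⁻ y in Ioo (-1:ℝ) 1, ENNReal.ofReal (4*ee) * H1 (ee*y+(ee-1))
        ≤ ENNReal.ofReal 4 * ∫⁻ x in Ioo (-1:ℝ) 1, H1 x := by
      rw [lintegral_const_mul' _ _ ENNReal.ofReal_ne_top, ← hconst, mul_assoc]
      exact mul_le_mul_right subst1 _
    have t2 : ∫⁻ y in Ioo (-1:ℝ) 1, ENNReal.ofReal (4*ee) * H1 (ee*y+(1-ee))
        ≤ ENNReal.ofReal 4 * ∫⁻ x in Ioo (-1:ℝ) 1, H1 x := by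
      rw [lintegral_const_mul' _ _ ENNReal.ofReal_ne_top, ← hconst, mul_assoc]
      exact mul_le_mul_right subst2 _
    have t3 : ∫⁻ y in Ioo (-1:ℝ) 1, ENNReal.ofReal (4*ee) * H2 (ee*y+(ee-1))
        ≤ ENNReal.ofReal 4 * ∫⁻ x in Ioo (-1:ℝ) 1, H2 x := by
      rw [lintegral_const_mul' _ _ ENNReal.ofReal_ne_top, ← hconst, mul_assoc]
      exact mul_le_mul_right subst3 _
    have t4 : ∫⁻ y in Ioo (-1:ℝ) 1, ENNReal.ofReal (4*ee) * H2 (ee*y+(1-ee))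
        ≤ ENNReal.ofReal 4 * ∫⁻ x in Ioo (-1:ℝ) 1, H2 x := by
      rw [lintegral_const_mul' _ _ ENNReal.ofReal_ne_top, ← hconst, mul_assoc]
      exact mul_le_mul_right subst4 _
    calc ∫⁻ y in Ioo (-1:ℝ) 1, G y
        = (∫⁻ y in Ioo (-1:ℝ) 1, ENNReal.ofReal (4*ee) * H1 (ee*y+(ee-1))) +
          ((∫⁻ y in Ioo (-1:ℝ) 1, ENNReal.ofReal (4*ee) * H1 (ee*y+(1-ee))) +
            ((∫⁻ y in Ioo (-1:ℝ) 1, ENNReal.ofReal (4*ee) * H2 (ee*y+(ee-1))) +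
              (∫⁻ y in Ioo (-1:ℝ) 1, ENNReal.ofReal (4*ee) * H2 (ee*y+(1-ee))))) := by
          rw [hGdef]
          rw [lintegral_add_left' mG1, lintegral_add_left' mG2, lintegral_add_left' mG3]
      _ ≤ (ENNReal.ofReal 4 * ∫⁻ x in Ioo (-1:ℝ) 1, H1 x) +
          ((ENNReal.ofReal 4 * ∫⁻ x in Ioo (-1:ℝ) 1, H1 x) +
            ((ENNReal.ofReal 4 * ∫⁻ x in Ioo (-1:ℝ) 1, H2 x) +
              (ENNReal.ofReal 4 * ∫⁻ x in Ioo (-1:ℝ) 1, H2 x))) :=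
          add_le_add t1 (add_le_add t2 (add_le_add t3 t4))
      _ = ENNReal.ofReal 8 * ((∫⁻ x in Ioo (-1:ℝ) 1, H1 x) + ∫⁻ x in Ioo (-1:ℝ) 1, H2 x) := by
          rw [show (ENNReal.ofReal 8 : ℝ≥0∞) = ENNReal.ofReal 4 + ENNReal.ofReal 4 from by
            rw [← ENNReal.ofReal_add] <;> norm_num]
          ring
      _ = ENNReal.ofReal 8 * energySq f g := by rw [energySq, hH1def, hH2def]
  -- putting the two components together
  have hcomp1 : ∫⁻ y in Ioo (-1:ℝ) 1,
      ENNReal.ofReal ((1 - y^2) * ‖deriv (fun y' => ufg f g s y') y‖^2)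
      ≤ ENNReal.ofReal 8 * energySq f g := by
    have step : ∫⁻ y in Ioo (-1:ℝ) 1,
        ENNReal.ofReal ((1 - y^2) * ‖deriv (fun y' => ufg f g s y') y‖^2)
        = ∫⁻ y in Ioo (-1:ℝ) 1, ENNReal.ofReal ((1 - y^2) * ‖Dy y‖^2) :=
      setLIntegral_congr_fun measurableSet_Ioo (fun y hy => by
        rw [(claimY y hy).deriv])
    rw [step]
    exact (setLIntegral_mono' measurableSet_Ioo pb1).trans hGbound
  have hcomp2 : ∫⁻ y in Ioo (-1:ℝ) 1,
      ENNReal.ofReal (‖derivWithin (fun s' => ufg f g s' y) (Ici (0:ℝ)) s‖^2)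
      ≤ ENNReal.ofReal 8 * energySq f g := by
    have step : ∫⁻ y in Ioo (-1:ℝ) 1,
        ENNReal.ofReal (‖derivWithin (fun s' => ufg f g s' y) (Ici (0:ℝ)) s‖^2)
        = ∫⁻ y in Ioo (-1:ℝ) 1, ENNReal.ofReal (‖Ds y‖^2) :=
      setLIntegral_congr_fun measurableSet_Ioo (fun y hy => by
        rw [claimS y hy])
    rw [step]
    exact (setLIntegral_mono' measurableSet_Ioo pb2).trans hGbound
  have hfinal : energySq (fun y => ufg f g s y)
      (fun y => derivWithin (fun s' => ufg f g s' y) (Ici (0:ℝ)) s)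
      ≤ ENNReal.ofReal 16 * energySq f g := by
    rw [energySq]
    refine (add_le_add hcomp1 hcomp2).trans (le_of_eq ?_)
    rw [show (ENNReal.ofReal 16 : ℝ≥0∞) = ENNReal.ofReal 8 + ENNReal.ofReal 8 from by
      rw [← ENNReal.ofReal_add] <;> norm_num, add_mul]
  have h16 : (ENNReal.ofReal 16) ^ (1/2 : ℝ) = ENNReal.ofReal 4 := by
    rw [ENNReal.ofReal_rpow_of_pos (by norm_num : (0:ℝ) < 16)]
    congr 1
    rw [show (16:ℝ) = (4:ℝ)^(2:ℕ) from by norm_num, ← Real.rpow_natCast (4:ℝ) 2,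
      ← Real.rpow_mul (by norm_num : (0:ℝ) ≤ 4)]
    norm_num
  calc (energySq (fun y => ufg f g s y)
      (fun y => derivWithin (fun s' => ufg f g s' y) (Ici (0:ℝ)) s)) ^ (1/2 : ℝ)
      ≤ (ENNReal.ofReal 16 * energySq f g) ^ (1/2 : ℝ) :=
        ENNReal.rpow_le_rpow hfinal (by norm_num)
    _ = (ENNReal.ofReal 16) ^ (1/2 : ℝ) * (energySq f g) ^ (1/2 : ℝ) :=
        ENNReal.mul_rpow_of_nonneg _ _ (by norm_num)
    _ = ENNReal.ofReal 4 * (energySq f g) ^ (1/2 : ℝ) := by rw [h16]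
end

section
/- For all odd pairs (f₁,f₂) with f₁,f₂ ∈ C^∞([−1,1]) complex-valued, one has Re[∫_{−1}^{1}(1−y²) f₂'(y) \overline{f₁'(y)} dy + ∫_{−1}^{1} ((1−y²)f₁''(y) − 2y f₁'(y) − 2y f₂'(y) − f₂(y)) \overline{f₂(y)} dy] = −|f₂(−1)|² − |f₂(1)|²; in particular this quantity is ≤ 0. -/
open MeasureTheory Set ENNReal Topology Filter

private lemma myIntervalIntegral_conj {f : ℝ → ℂ} {a b : ℝ} :
    (∫ y in a..b, (starRingEnd ℂ) (f y)) = (starRingEnd ℂ) (∫ y in a..b, f y) := by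
  simp [intervalIntegral, integral_conj, map_sub]

/-- Dissipativity of the free generator (from the proof of Lemma `lem:S0`): for odd
smooth pairs `(f₁,f₂)` on `[-1,1]`,
`Re (𝔏₀(f₁,f₂) | (f₁,f₂))_H = −|f₂(−1)|² − |f₂(1)|² ≤ 0`. -/
theorem stmt10 (f₁ f₂ : ℝ → ℂ)
    (hf₁ : ContDiffOn ℝ (⊤:ℕ∞) f₁ (Icc (-1:ℝ) 1))
    (hf₂ : ContDiffOn ℝ (⊤:ℕ∞) f₂ (Icc (-1:ℝ) 1))
    (hodd₁ : ∀ y ∈ Icc (-1:ℝ) 1, f₁ (-y) = - f₁ y)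
    (hodd₂ : ∀ y ∈ Icc (-1:ℝ) 1, f₂ (-y) = - f₂ y) :
    ((∫ y in (-1:ℝ)..1, (1 - (y:ℂ)^2) * deriv f₂ y * (starRingEnd ℂ) (deriv f₁ y)) +
      ∫ y in (-1:ℝ)..1,
        ((1 - (y:ℂ)^2) * deriv (deriv f₁) y - 2 * (y:ℂ) * deriv f₁ y
          - 2 * (y:ℂ) * deriv f₂ y - f₂ y) * (starRingEnd ℂ) (f₂ y)).re
      = -‖f₂ (-1)‖^2 - ‖f₂ 1‖^2 ∧
    ((∫ y in (-1:ℝ)..1, (1 - (y:ℂ)^2) * deriv f₂ y * (starRingEnd ℂ) (deriv f₁ y)) +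
      ∫ y in (-1:ℝ)..1,
        ((1 - (y:ℂ)^2) * deriv (deriv f₁) y - 2 * (y:ℂ) * deriv f₁ y
          - 2 * (y:ℂ) * deriv f₂ y - f₂ y) * (starRingEnd ℂ) (f₂ y)).re ≤ 0 := by
  clear hodd₁ hodd₂
  have h1 : (-1:ℝ) < 1 := by norm_num
  set I : Set ℝ := Icc (-1:ℝ) 1 with hI
  have uD : UniqueDiffOn ℝ I := uniqueDiffOn_Icc h1
  set g₁ : ℝ → ℂ := derivWithin f₁ I with hg₁def
  set g₂ : ℝ → ℂ := derivWithin f₂ I with hg₂def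
  set k₁ : ℝ → ℂ := derivWithin g₁ I with hk₁def
  have hg₁ : ContDiffOn ℝ (⊤:ℕ∞) g₁ I := hf₁.derivWithin uD (by simp)
  have hg₂ : ContDiffOn ℝ (⊤:ℕ∞) g₂ I := hf₂.derivWithin uD (by simp)
  have hk₁ : ContDiffOn ℝ (⊤:ℕ∞) k₁ I := hg₁.derivWithin uD (by simp)
  have cf₂ : ContinuousOn f₂ I := hf₂.continuousOn
  have cg₁ : ContinuousOn g₁ I := hg₁.continuousOn
  have cg₂ : ContinuousOn g₂ I := hg₂.continuousOn
  have ck₁ : ContinuousOn k₁ I := hk₁.continuousOn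
  have hstar : ∀ {h : ℝ → ℂ}, ContinuousOn h I →
      ContinuousOn (fun y => (starRingEnd ℂ) (h y)) I :=
    fun hh => continuous_star.comp_continuousOn hh
  have cF : Continuous (fun y : ℝ => (1:ℂ) - (y:ℂ)^2) := by continuity
  have cY : Continuous (fun y : ℝ => (y:ℂ)) := Complex.continuous_ofReal
  have hIoo : ∀ y ∈ Ioo (-1:ℝ) 1, I ∈ 𝓝 y := fun y hy => Icc_mem_nhds hy.1 hy.2
  have hD : ∀ (f : ℝ → ℂ), ContDiffOn ℝ (⊤:ℕ∞) f I → ∀ y ∈ Ioo (-1:ℝ) 1,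
      HasDerivAt f (derivWithin f I y) y := by
    intro f hf y hy
    have hd : DifferentiableAt ℝ f y :=
      (hf.differentiableOn (by simp)).differentiableAt (hIoo y hy)
    rw [derivWithin_of_mem_nhds (hIoo y hy)]
    exact hd.hasDerivAt
  have hderiv₁ : ∀ y ∈ Ioo (-1:ℝ) 1, deriv f₁ y = g₁ y := fun y hy =>
    (derivWithin_of_mem_nhds (hIoo y hy)).symm
  have hderiv₂ : ∀ y ∈ Ioo (-1:ℝ) 1, deriv f₂ y = g₂ y := fun y hy =>
    (derivWithin_of_mem_nhds (hIoo y hy)).symm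
  have hderiv₁' : ∀ y ∈ Ioo (-1:ℝ) 1, deriv (deriv f₁) y = k₁ y := by
    intro y hy
    have hee : deriv f₁ =ᶠ[nhds y] g₁ :=
      Filter.eventuallyEq_of_mem (Ioo_mem_nhds hy.1 hy.2) (fun z hz => hderiv₁ z hz)
    rw [hee.deriv_eq]
    exact (derivWithin_of_mem_nhds (hIoo y hy)).symm
  -- a.e. membership in the open interval
  have hae : ∀ᵐ x : ℝ, x ∈ uIoc (-1:ℝ) 1 → x ∈ Ioo (-1:ℝ) 1 := by
    have hne : ∀ᵐ x : ℝ, x ≠ (1:ℝ) := by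
      refine ae_iff.2 ?_
      have : {x : ℝ | ¬ x ≠ (1:ℝ)} = {(1:ℝ)} := by ext x; simp
      rw [this]
      exact measure_singleton 1
    filter_upwards [hne] with x hx hxI
    rw [uIoc_of_le h1.le] at hxI
    exact ⟨hxI.1, lt_of_le_of_ne hxI.2 hx⟩
  -- interval integrability helper
  have hII : ∀ (h : ℝ → ℂ), ContinuousOn h I → IntervalIntegrable h volume (-1:ℝ) 1 := by
    intro h hh
    apply ContinuousOn.intervalIntegrable
    rwa [uIcc_of_le h1.le]
  -- named integrals
  set Ia : ℂ := ∫ y in (-1:ℝ)..1, (1 - (y:ℂ)^2) * g₂ y * (starRingEnd ℂ) (g₁ y) with hIa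
  set J1 : ℂ := ∫ y in (-1:ℝ)..1, (1 - (y:ℂ)^2) * k₁ y * (starRingEnd ℂ) (f₂ y) with hJ1
  set J2 : ℂ := ∫ y in (-1:ℝ)..1, 2 * (y:ℂ) * g₁ y * (starRingEnd ℂ) (f₂ y) with hJ2
  set K : ℂ := ∫ y in (-1:ℝ)..1, (y:ℂ) * g₂ y * (starRingEnd ℂ) (f₂ y) with hK
  set J4 : ℂ := ∫ y in (-1:ℝ)..1, f₂ y * (starRingEnd ℂ) (f₂ y) with hJ4
  set J5 : ℂ := ∫ y in (-1:ℝ)..1, (1 - (y:ℂ)^2) * g₁ y * (starRingEnd ℂ) (g₂ y) with hJ5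
  -- integrability of the pieces
  have iJ1 : IntervalIntegrable (fun y : ℝ => (1 - (y:ℂ)^2) * k₁ y * (starRingEnd ℂ) (f₂ y))
      volume (-1:ℝ) 1 := hII _ (((cF.continuousOn).mul ck₁).mul (hstar cf₂))
  have iJ2 : IntervalIntegrable (fun y : ℝ => 2 * (y:ℂ) * g₁ y * (starRingEnd ℂ) (f₂ y))
      volume (-1:ℝ) 1 :=
    hII _ (((((continuous_const : Continuous fun _ : ℝ => (2:ℂ)).mul cY).continuousOn).mul
      cg₁).mul (hstar cf₂))
  have iK : IntervalIntegrable (fun y : ℝ => (y:ℂ) * g₂ y * (starRingEnd ℂ) (f₂ y))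
      volume (-1:ℝ) 1 := hII _ (((cY.continuousOn).mul cg₂).mul (hstar cf₂))
  have iJ4 : IntervalIntegrable (fun y : ℝ => f₂ y * (starRingEnd ℂ) (f₂ y))
      volume (-1:ℝ) 1 := hII _ (cf₂.mul (hstar cf₂))
  have iJ5 : IntervalIntegrable (fun y : ℝ => (1 - (y:ℂ)^2) * g₁ y * (starRingEnd ℂ) (g₂ y))
      volume (-1:ℝ) 1 := hII _ (((cF.continuousOn).mul cg₁).mul (hstar cg₂))
  have iK' : IntervalIntegrable (fun y : ℝ => (y:ℂ) * f₂ y * (starRingEnd ℂ) (g₂ y))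
      volume (-1:ℝ) 1 := hII _ (((cY.continuousOn).mul cf₂).mul (hstar cg₂))
  -- rewrite the two integrals of the statement
  have e1 : (∫ y in (-1:ℝ)..1, (1 - (y:ℂ)^2) * deriv f₂ y * (starRingEnd ℂ) (deriv f₁ y))
      = Ia := by
    refine intervalIntegral.integral_congr_ae ?_
    filter_upwards [hae] with x hx hxI
    rw [hderiv₁ x (hx hxI), hderiv₂ x (hx hxI)]
  have e2 : (∫ y in (-1:ℝ)..1,
        ((1 - (y:ℂ)^2) * deriv (deriv f₁) y - 2 * (y:ℂ) * deriv f₁ y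
          - 2 * (y:ℂ) * deriv f₂ y - f₂ y) * (starRingEnd ℂ) (f₂ y))
      = J1 - J2 - 2 * K - J4 := by
    have congr2 : (∫ y in (-1:ℝ)..1,
        ((1 - (y:ℂ)^2) * deriv (deriv f₁) y - 2 * (y:ℂ) * deriv f₁ y
          - 2 * (y:ℂ) * deriv f₂ y - f₂ y) * (starRingEnd ℂ) (f₂ y))
        = ∫ y in (-1:ℝ)..1,
            ((1 - (y:ℂ)^2) * k₁ y * (starRingEnd ℂ) (f₂ y)
              - 2 * (y:ℂ) * g₁ y * (starRingEnd ℂ) (f₂ y))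
            - ((y:ℂ) * g₂ y * (starRingEnd ℂ) (f₂ y) + (y:ℂ) * g₂ y * (starRingEnd ℂ) (f₂ y)
              + f₂ y * (starRingEnd ℂ) (f₂ y)) := by
      refine intervalIntegral.integral_congr_ae ?_
      filter_upwards [hae] with x hx hxI
      rw [hderiv₁ x (hx hxI), hderiv₂ x (hx hxI), hderiv₁' x (hx hxI)]
      ring
    rw [congr2, intervalIntegral.integral_sub (iJ1.sub iJ2) ((iK.add iK).add iJ4),
      intervalIntegral.integral_sub iJ1 iJ2,
      intervalIntegral.integral_add (iK.add iK) iJ4,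
      intervalIntegral.integral_add iK iK]
    ring
  -- FTC 1 : integration by parts identity  J1 - J2 + J5 = 0
  have ftc1 : J1 - J2 + J5 = 0 := by
    have hsum : (∫ y in (-1:ℝ)..1,
        ((1 - (y:ℂ)^2) * k₁ y * (starRingEnd ℂ) (f₂ y)
          - 2 * (y:ℂ) * g₁ y * (starRingEnd ℂ) (f₂ y)
          + (1 - (y:ℂ)^2) * g₁ y * (starRingEnd ℂ) (g₂ y)))
        = ((1 - ((1:ℝ):ℂ)^2) * g₁ 1 * (starRingEnd ℂ) (f₂ 1))
          - ((1 - ((-1:ℝ):ℂ)^2) * g₁ (-1) * (starRingEnd ℂ) (f₂ (-1))) := by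
      refine intervalIntegral.integral_eq_sub_of_hasDerivAt_of_le h1.le
        (f := fun y : ℝ => (1 - (y:ℂ)^2) * g₁ y * (starRingEnd ℂ) (f₂ y)) ?_ ?_ ?_
      · exact ((cF.continuousOn).mul cg₁).mul (hstar cf₂)
      · intro x hx
        have hF : HasDerivAt (fun y : ℝ => (1:ℂ) - (y:ℂ)^2) (-(2*(x:ℂ))) x := by
          have h0 : HasDerivAt (fun y : ℝ => (y:ℂ)) 1 x := Complex.ofRealCLM.hasDerivAt
          have h3 := (h0.mul h0).const_sub 1
          have hfe : (fun y : ℝ => (1:ℂ) - (y:ℂ)^2) = fun y : ℝ => (1:ℂ) - (y:ℂ)*(y:ℂ) := by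
            funext y; ring
          rw [hfe]
          exact h3.congr_deriv (by ring)
        have hc : HasDerivAt (fun y => (starRingEnd ℂ) (f₂ y)) ((starRingEnd ℂ) (g₂ x)) x := by
          exact (hD f₂ hf₂ x hx).star
        have h := (hF.mul (hD g₁ hg₁ x hx)).mul hc
        exact h.congr_deriv (by simp only [Pi.mul_apply, hk₁def, hg₂def]; ring)
      · exact (iJ1.sub iJ2).add iJ5
    have hsplit : (∫ y in (-1:ℝ)..1,
        ((1 - (y:ℂ)^2) * k₁ y * (starRingEnd ℂ) (f₂ y)
          - 2 * (y:ℂ) * g₁ y * (starRingEnd ℂ) (f₂ y)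
          + (1 - (y:ℂ)^2) * g₁ y * (starRingEnd ℂ) (g₂ y)))
        = J1 - J2 + J5 := by
      rw [intervalIntegral.integral_add (iJ1.sub iJ2) iJ5,
        intervalIntegral.integral_sub iJ1 iJ2]
    rw [hsplit] at hsum
    rw [hsum]
    norm_num
  -- FTC 2 : J4 + K + conj K = boundary terms
  have ftc2 : J4 + K + (∫ y in (-1:ℝ)..1, (y:ℂ) * f₂ y * (starRingEnd ℂ) (g₂ y))
      = f₂ 1 * (starRingEnd ℂ) (f₂ 1) + f₂ (-1) * (starRingEnd ℂ) (f₂ (-1)) := by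
    have hsum : (∫ y in (-1:ℝ)..1,
        (f₂ y * (starRingEnd ℂ) (f₂ y) + (y:ℂ) * g₂ y * (starRingEnd ℂ) (f₂ y)
          + (y:ℂ) * f₂ y * (starRingEnd ℂ) (g₂ y)))
        = (((1:ℝ):ℂ) * f₂ 1 * (starRingEnd ℂ) (f₂ 1))
          - (((-1:ℝ):ℂ) * f₂ (-1) * (starRingEnd ℂ) (f₂ (-1))) := by
      refine intervalIntegral.integral_eq_sub_of_hasDerivAt_of_le h1.le
        (f := fun y : ℝ => (y:ℂ) * f₂ y * (starRingEnd ℂ) (f₂ y)) ?_ ?_ ?_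
      · exact ((cY.continuousOn).mul cf₂).mul (hstar cf₂)
      · intro x hx
        have h0 : HasDerivAt (fun y : ℝ => (y:ℂ)) 1 x := Complex.ofRealCLM.hasDerivAt
        have hc : HasDerivAt (fun y => (starRingEnd ℂ) (f₂ y)) ((starRingEnd ℂ) (g₂ x)) x := by
          exact (hD f₂ hf₂ x hx).star
        have h := (h0.mul (hD f₂ hf₂ x hx)).mul hc
        exact h.congr_deriv (by simp only [Pi.mul_apply, hk₁def, hg₂def]; ring)
      · exact (iJ4.add iK).add iK'
    have hsplit : (∫ y in (-1:ℝ)..1,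
        (f₂ y * (starRingEnd ℂ) (f₂ y) + (y:ℂ) * g₂ y * (starRingEnd ℂ) (f₂ y)
          + (y:ℂ) * f₂ y * (starRingEnd ℂ) (g₂ y)))
        = J4 + K + (∫ y in (-1:ℝ)..1, (y:ℂ) * f₂ y * (starRingEnd ℂ) (g₂ y)) := by
      rw [intervalIntegral.integral_add (iJ4.add iK) iK',
        intervalIntegral.integral_add iJ4 iK]
    rw [hsplit] at hsum
    rw [hsum]
    push_cast
    ring
  -- conjugation relations
  have hconjIa : (starRingEnd ℂ) Ia = J5 := by
    rw [hIa, ← myIntervalIntegral_conj]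
    refine intervalIntegral.integral_congr (fun y _ => ?_)
    simp only [map_mul, map_sub, map_one, map_pow, Complex.conj_ofReal,
      Complex.conj_conj, RingHomCompTriple.comp_apply, RingHom.id_apply]
    ring
  have hconjK : (starRingEnd ℂ) K = ∫ y in (-1:ℝ)..1, (y:ℂ) * f₂ y * (starRingEnd ℂ) (g₂ y) := by
    rw [hK, ← myIntervalIntegral_conj]
    refine intervalIntegral.integral_congr (fun y _ => ?_)
    simp only [map_mul, Complex.conj_ofReal, Complex.conj_conj]
    ring
  -- put everything together
  have total : (∫ y in (-1:ℝ)..1, (1 - (y:ℂ)^2) * deriv f₂ y * (starRingEnd ℂ) (deriv f₁ y)) +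
      (∫ y in (-1:ℝ)..1,
        ((1 - (y:ℂ)^2) * deriv (deriv f₁) y - 2 * (y:ℂ) * deriv f₁ y
          - 2 * (y:ℂ) * deriv f₂ y - f₂ y) * (starRingEnd ℂ) (f₂ y))
      = (Ia - (starRingEnd ℂ) Ia) - (K - (starRingEnd ℂ) K)
        - (f₂ 1 * (starRingEnd ℂ) (f₂ 1) + f₂ (-1) * (starRingEnd ℂ) (f₂ (-1))) := by
    rw [e1, e2]
    linear_combination ftc1 + hconjIa - ftc2 - hconjK
  have hre : ((∫ y in (-1:ℝ)..1, (1 - (y:ℂ)^2) * deriv f₂ y * (starRingEnd ℂ) (deriv f₁ y)) +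
      ∫ y in (-1:ℝ)..1,
        ((1 - (y:ℂ)^2) * deriv (deriv f₁) y - 2 * (y:ℂ) * deriv f₁ y
          - 2 * (y:ℂ) * deriv f₂ y - f₂ y) * (starRingEnd ℂ) (f₂ y)).re
      = -‖f₂ (-1)‖^2 - ‖f₂ 1‖^2 := by
    rw [total]
    simp only [Complex.sub_re, Complex.add_re, Complex.conj_re, Complex.mul_conj,
      Complex.ofReal_re, Complex.normSq_eq_norm_sq]
    ring
  refine ⟨hre, ?_⟩
  rw [hre]
  have := sq_nonneg ‖f₂ (-1)‖
  have := sq_nonneg ‖f₂ 1‖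
  linarith
end
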